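/- arXiv:2512.07617 — 6 statements merged into one kernel-verified Lean document; each statement's English description precedes it below -/
import Mathlib

section
/- Let C_H ≥ 0 and C_S be bounded self-adjoint resp. skew-adjoint operators on H, C_η = η C_S + C_H, and suppose C = C_S + C_H is hypocoercive with index m with constant κ. Then there exists R ≥ 1 such that for every y ∈ H and every ℓ ∈ {0,…,m} with ⟨C_S^ℓ y, C_H C_S^ℓ y⟩ ≥ (κ/(m+1))‖y‖², and every real η with |η| ≥ R, one has ⟨C_η^ℓ y, C_H C_η^ℓ y⟩ ≥ (1/2)·η^{2ℓ}·⟨C_S^ℓ y, C_H C_S^ℓ y⟩. -/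
set_option maxHeartbeats 1000000

open scoped ComplexInnerProductSpace

lemma key_identity {H : Type*} [NormedAddCommGroup H] [InnerProductSpace ℂ H]
    (CH CS : H →L[ℂ] H) (η : ℝ) (ℓ : ℕ) :
    ((η:ℂ)•CS+CH)^(ℓ+1) - ((η^(ℓ+1):ℝ):ℂ)•CS^(ℓ+1)
    = ((η:ℂ)•CS+CH) * (((η:ℂ)•CS+CH)^ℓ - ((η^ℓ:ℝ):ℂ)•CS^ℓ) + ((η^ℓ:ℝ):ℂ)•(CH*CS^ℓ) := by
  rw [pow_succ', pow_succ' CS]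
  push_cast [pow_succ]
  simp only [mul_sub, mul_smul_comm, add_mul, smul_mul_assoc, smul_smul, smul_add]
  ring_nf
  abel

lemma pow_norm_le {H : Type*} [NormedAddCommGroup H] [InnerProductSpace ℂ H]
    (T : H →L[ℂ] H) (a : ℝ) (ha1 : 1 ≤ a) (hT : ‖T‖ ≤ a) (ℓ : ℕ) : ‖T^ℓ‖ ≤ a^ℓ := by
  induction ℓ with
  | zero => simpa [ContinuousLinearMap.one_def] using ContinuousLinearMap.norm_id_le
  | succ ℓ ih =>
    rw [pow_succ, pow_succ]
    exact (norm_mul_le _ _).trans (mul_le_mul ih hT (norm_nonneg _) (by positivity))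

lemma pert_norm {H : Type*} [NormedAddCommGroup H] [InnerProductSpace ℂ H]
    (CH CS : H →L[ℂ] H) (a : ℝ) (ha1 : 1 ≤ a) (ha : ‖CS‖ + ‖CH‖ ≤ a)
    (η : ℝ) (hη : 1 ≤ |η|) (ℓ : ℕ) :
    ‖((η:ℂ)•CS+CH)^ℓ - ((η^ℓ:ℝ):ℂ)•CS^ℓ‖ * |η| ≤ ℓ * a^ℓ * |η|^ℓ := by
  have hS : ‖CS‖ ≤ a := by have := norm_nonneg CH; linarith
  have hHa : ‖CH‖ ≤ a := by have := norm_nonneg CS; linarith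
  have ha0 : (0:ℝ) ≤ a := by linarith
  have hη0 : (0:ℝ) < |η| := by linarith
  induction ℓ with
  | zero => simp
  | succ ℓ ih =>
    have hkey := key_identity CH CS η ℓ
    have hSl : ‖CS^ℓ‖ ≤ a^ℓ := pow_norm_le CS a ha1 hS ℓ
    have h1 : ‖((η:ℂ)•CS+CH)^(ℓ+1) - ((η^(ℓ+1):ℝ):ℂ)•CS^(ℓ+1)‖
        ≤ ‖(η:ℂ)•CS+CH‖ * ‖((η:ℂ)•CS+CH)^ℓ - ((η^ℓ:ℝ):ℂ)•CS^ℓ‖ + |η|^ℓ * (a * a^ℓ) := by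
      rw [hkey]
      refine (norm_add_le _ _).trans (add_le_add (norm_mul_le _ _) ?_)
      refine (norm_smul ((η^ℓ:ℝ):ℂ) (CH*CS^ℓ)).le.trans ?_
      have h2 : ‖((η^ℓ:ℝ):ℂ)‖ = |η|^ℓ := by
        rw [Complex.norm_real, Real.norm_eq_abs, abs_pow]
      rw [h2]
      gcongr
      exact (norm_mul_le _ _).trans (mul_le_mul hHa hSl (norm_nonneg _) ha0)
    have hC : ‖(η:ℂ)•CS+CH‖ ≤ |η| * a := by
      refine (norm_add_le _ _).trans ?_
      rw [norm_smul (η:ℂ) CS, Complex.norm_real, Real.norm_eq_abs]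
      nlinarith [norm_nonneg CS, norm_nonneg CH]
    have hD0 : (0:ℝ) ≤ ‖((η:ℂ)•CS+CH)^ℓ - ((η^ℓ:ℝ):ℂ)•CS^ℓ‖ := norm_nonneg _
    have hηl : (0:ℝ) < |η|^ℓ := by positivity
    have hal : (0:ℝ) < a^ℓ := by positivity
    calc ‖((η:ℂ)•CS+CH)^(ℓ+1) - ((η^(ℓ+1):ℝ):ℂ)•CS^(ℓ+1)‖ * |η|
        ≤ (‖(η:ℂ)•CS+CH‖ * ‖((η:ℂ)•CS+CH)^ℓ - ((η^ℓ:ℝ):ℂ)•CS^ℓ‖ + |η|^ℓ * (a * a^ℓ)) * |η| := by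
          gcongr
      _ = ‖(η:ℂ)•CS+CH‖ * (‖((η:ℂ)•CS+CH)^ℓ - ((η^ℓ:ℝ):ℂ)•CS^ℓ‖ * |η|) + |η|^(ℓ+1) * (a * a^ℓ) := by
          ring
      _ ≤ (|η| * a) * (ℓ * a^ℓ * |η|^ℓ) + |η|^(ℓ+1) * (a * a^ℓ) := by
          refine add_le_add ?_ le_rfl
          exact mul_le_mul hC ih (by positivity) (by positivity)
      _ ≤ (ℓ+1) * a^(ℓ+1) * |η|^(ℓ+1) := by
          rw [pow_succ, pow_succ]
          push_cast
          nlinarith [hηl, hal, Nat.cast_nonneg (α := ℝ) ℓ]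
      _ = ↑(ℓ+1) * a^(ℓ+1) * |η|^(ℓ+1) := by push_cast; ring

/-- Let `CH ≥ 0` self-adjoint, `CS` skew-adjoint, `C_η = η CS + CH`, and suppose
`C = CS + CH` is hypocoercive with index `m` and constant `κ`. Then there is `R ≥ 1` such
that for every `y`, every `ℓ ∈ {0,…,m}` with `⟨CS^ℓ y, CH CS^ℓ y⟩ ≥ (κ/(m+1))‖y‖²`, and
every `|η| ≥ R`: `⟨C_η^ℓ y, CH C_η^ℓ y⟩ ≥ (1/2) η^{2ℓ} ⟨CS^ℓ y, CH CS^ℓ y⟩`. -/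
theorem stmt3
    {H : Type*} [NormedAddCommGroup H] [InnerProductSpace ℂ H] [CompleteSpace H]
    (CH CS : H →L[ℂ] H)
    (hCH : IsSelfAdjoint CH)
    (hCHpos : ∀ x : H, 0 ≤ (⟪x, CH x⟫).re)
    (hCS : ContinuousLinearMap.adjoint CS = -CS)
    (m : ℕ) (κ : ℝ) (hκ : 0 < κ)
    (hhypo : ∀ x : H, κ * ‖x‖ ^ 2 ≤ ∑ j ∈ Finset.range (m + 1), (⟪(CS ^ j) x, CH ((CS ^ j) x)⟫).re) :
    ∃ R : ℝ, 1 ≤ R ∧ ∀ (y : H) (ℓ : ℕ), ℓ ≤ m →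
      κ / (m + 1) * ‖y‖ ^ 2 ≤ (⟪(CS ^ ℓ) y, CH ((CS ^ ℓ) y)⟫).re →
      ∀ η : ℝ, R ≤ |η| →
        (1 / 2) * η ^ (2 * ℓ) * (⟪(CS ^ ℓ) y, CH ((CS ^ ℓ) y)⟫).re
          ≤ (⟪(((η : ℂ) • CS + CH) ^ ℓ) y, CH ((((η : ℂ) • CS + CH) ^ ℓ) y)⟫).re := by
  set a : ℝ := ‖CS‖ + ‖CH‖ + 1 with ha_def
  have ha1 : 1 ≤ a := by have := norm_nonneg CS; have := norm_nonneg CH; simp [ha_def]; positivity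
  have ha : ‖CS‖ + ‖CH‖ ≤ a := by simp [ha_def]
  have ha0 : (0:ℝ) ≤ a := by linarith
  set K : ℝ := 3 * ((m:ℝ)+1)^2 * a^(2*m+1) with hK_def
  have hK0 : 0 < K := by positivity
  set μ : ℝ := κ / ((m:ℝ)+1) with hμ_def
  have hμ0 : 0 < μ := by positivity
  refine ⟨max 1 (2*K/μ), le_max_left _ _, ?_⟩
  intro y ℓ hℓ hP η hηR
  have hη1 : (1:ℝ) ≤ |η| := le_trans (le_max_left _ _) hηR
  have hη0 : (0:ℝ) < |η| := by linarith
  have hηK : 2*K/μ ≤ |η| := le_trans (le_max_right _ _) hηR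
  have hμE : 2*K ≤ μ * |η| := by
    rw [div_le_iff₀ hμ0] at hηK; linarith [hηK]
  set w : H := (CS ^ ℓ) y with hw_def
  set P : ℝ := (⟪w, CH w⟫).re with hP_def
  have hP0 : 0 ≤ P := hCHpos w
  set N : ℝ := ‖y‖ with hN_def
  have hN0 : 0 ≤ N := norm_nonneg y
  set D : H →L[ℂ] H := ((η:ℂ)•CS+CH)^ℓ - ((η^ℓ:ℝ):ℂ)•CS^ℓ with hD_def
  set u : H := ((η^ℓ:ℝ):ℂ) • w with hu_def
  set v : H := D y with hv_def
  have hsum : (((η:ℂ)•CS+CH)^ℓ) y = u + v := by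
    simp only [hv_def, hD_def, hu_def, hw_def, ContinuousLinearMap.sub_apply,
      ContinuousLinearMap.smul_apply]
    abel
  set e : ℝ := |η|^ℓ with he_def
  have he0 : 0 < e := by positivity
  set nu : ℝ := ‖u‖ with hnu_def
  set nv : ℝ := ‖v‖ with hnv_def
  have hnu0 : 0 ≤ nu := norm_nonneg u
  have hnv0 : 0 ≤ nv := norm_nonneg v
  -- norm bounds
  have hSl : ‖(CS:H →L[ℂ] H)^ℓ‖ ≤ a^ℓ := pow_norm_le CS a ha1 (by linarith [norm_nonneg CH]) ℓ
  have hwn : ‖w‖ ≤ a^ℓ * N := by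
    calc ‖w‖ ≤ ‖(CS:H →L[ℂ] H)^ℓ‖ * ‖y‖ := ContinuousLinearMap.le_opNorm _ y
    _ ≤ a^ℓ * N := by rw [hN_def]; gcongr
  have hu_bound : nu ≤ e * (a^ℓ * N) := by
    rw [hnu_def, hu_def, norm_smul, Complex.norm_real, Real.norm_eq_abs, abs_pow]
    gcongr
  have hv_bound : nv * |η| ≤ (ℓ * a^ℓ * e) * N := by
    calc nv * |η| ≤ (‖D‖ * N) * |η| := by
          rw [hnv_def, hv_def, hN_def]; gcongr; exact ContinuousLinearMap.le_opNorm _ y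
    _ = (‖D‖ * |η|) * N := by ring
    _ ≤ (ℓ * a^ℓ * |η|^ℓ) * N := mul_le_mul_of_nonneg_right (pert_norm CH CS a ha1 ha η hη1 ℓ) hN0
    _ = (ℓ * a^ℓ * e) * N := by rw [he_def]
  have hv_bound' : nv ≤ (ℓ * a^ℓ * e) * N := by
    nlinarith [hv_bound]
  -- expansion of the inner product
  have hRe_uu : (⟪u, CH u⟫).re = e^2 * P := by
    rw [hu_def, map_smul, inner_smul_left, inner_smul_right, Complex.conj_ofReal]
    rw [show ((η^ℓ:ℝ):ℂ) * (((η^ℓ:ℝ):ℂ) * ⟪w, CH w⟫) = (((η^ℓ)^2:ℝ):ℂ) * ⟪w, CH w⟫ by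
      push_cast; ring]
    rw [Complex.re_ofReal_mul, he_def, ← abs_pow, sq_abs, ← hP_def]
  have habs : ∀ x z : H, |(⟪x, CH z⟫).re| ≤ a * (‖x‖ * ‖z‖) := by
    intro x z
    refine (Complex.abs_re_le_norm _).trans ?_
    calc ‖(⟪x, CH z⟫ : ℂ)‖ ≤ ‖x‖ * ‖CH z‖ := norm_inner_le_norm x (CH z)
    _ ≤ ‖x‖ * (‖CH‖ * ‖z‖) := by gcongr; exact ContinuousLinearMap.le_opNorm CH z
    _ ≤ a * (‖x‖ * ‖z‖) := by
        have hH : ‖CH‖ ≤ a := by have := norm_nonneg CS; linarith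
        nlinarith [mul_nonneg (mul_nonneg (norm_nonneg x) (norm_nonneg z)) (sub_nonneg.mpr hH)]
  have h_uv := habs u v
  have h_vu := habs v u
  have h_vv := hCHpos v
  have hexp : (⟪u+v, CH (u+v)⟫).re
      = (⟪u, CH u⟫).re + (⟪u, CH v⟫).re + (⟪v, CH u⟫).re + (⟪v, CH v⟫).re := by
    rw [map_add, inner_add_left, inner_add_right, inner_add_right]
    simp only [Complex.add_re]
    ring
  clear_value a K μ w P N D u v e nu nv
  -- the key claim
  have claim : 2 * (a * (nu * nv)) ≤ (1/2) * e^2 * P := by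
    have hstep1 : (2 * (a * (nu * nv))) * |η| ≤ 2 * a * (e * (a^ℓ * N)) * ((ℓ * a^ℓ * e) * N) := by
      calc (2 * (a * (nu * nv))) * |η| = 2 * a * nu * (nv * |η|) := by ring
      _ ≤ 2 * a * (e * (a^ℓ * N)) * ((ℓ * a^ℓ * e) * N) := by
          have h2a : (0:ℝ) ≤ 2 * a := by linarith
          refine mul_le_mul ?_ hv_bound (mul_nonneg hnv0 hη0.le) (by positivity)
          nlinarith [mul_le_mul_of_nonneg_left hu_bound h2a]
    have hstep2 : 2 * a * (e * (a^ℓ * N)) * ((ℓ * a^ℓ * e) * N) ≤ K * (e^2 * N^2) := by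
      have hal : a^ℓ * a^ℓ * a ≤ a^(2*m+1) := by
        calc a^ℓ * a^ℓ * a = a^(2*ℓ+1) := by rw [two_mul, pow_succ, pow_add]
        _ ≤ a^(2*m+1) := pow_le_pow_right₀ ha1 (by omega)
      have hlm : (ℓ:ℝ) ≤ (m:ℝ) := by exact_mod_cast hℓ
      have h2l : 2 * (ℓ:ℝ) ≤ 3 * ((m:ℝ)+1)^2 := by nlinarith [Nat.cast_nonneg (α := ℝ) m]
      have hprod : 2 * (ℓ:ℝ) * (a^ℓ * a^ℓ * a) ≤ 3 * ((m:ℝ)+1)^2 * a^(2*m+1) :=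
        mul_le_mul h2l hal (by positivity) (by positivity)
      have hfin := mul_le_mul_of_nonneg_right hprod (mul_nonneg (sq_nonneg e) (sq_nonneg N))
      rw [hK_def]
      linarith only [hfin]
    have hstep3 : K * (e^2 * N^2) ≤ ((1/2) * e^2 * P) * |η| := by
      have h1 : 2 * K * N^2 ≤ μ * |η| * N^2 := mul_le_mul_of_nonneg_right hμE (sq_nonneg N)
      have h2 : μ * N^2 * |η| ≤ P * |η| := mul_le_mul_of_nonneg_right hP hη0.le
      have h3 : K * N^2 ≤ (1/2) * (P * |η|) := by linarith only [h1, h2]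
      have h4 := mul_le_mul_of_nonneg_left h3 (sq_nonneg e)
      linarith only [h4]
    have := le_of_mul_le_mul_right (hstep1.trans (hstep2.trans hstep3)) hη0
    linarith
  -- finish
  rw [hsum, hexp, hRe_uu]
  have hη2l : η^(2*ℓ) = e^2 := by
    rw [he_def, pow_mul', ← sq_abs (η^ℓ), abs_pow]
  rw [hη2l]
  rw [← hnu_def, ← hnv_def] at h_uv h_vu
  have h1 : -(a * (nu * nv)) ≤ (⟪u, CH v⟫).re := by
    have := abs_le.mp h_uv; linarith [this.1]
  have h2 : -(a * (nv * nu)) ≤ (⟪v, CH u⟫).re := by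
    have := abs_le.mp h_vu; linarith [this.1]
  linarith only [claim, h_vv, h1, h2]
end

section
/- Let C ∈ B(H) be accretive and hypocoercive with index m, and C_η = η C_S + C_H. Then for every R ≥ 1 there exists μ > 0 such that for all y ∈ H and all real η with 1 ≤ |η| ≤ R: Σ_{j=0}^{m} η^{−2j} ⟨C_η^j y, C_H C_η^j y⟩ ≥ μ ‖y‖². -/
open scoped ComplexInnerProductSpace
set_option linter.unusedSectionVars false
set_option maxHeartbeats 1000000

section Aux
variable {H : Type*} [NormedAddCommGroup H] [InnerProductSpace ℂ H] [CompleteSpace H]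
variable {CH : H →L[ℂ] H}

private lemma B_symm (hsa : ContinuousLinearMap.adjoint CH = CH) (x y : H) :
    (⟪x, CH y⟫).re = (⟪y, CH x⟫).re := by
  have h1 : ⟪x, CH y⟫ = ⟪CH x, y⟫ := by
    conv_lhs => rw [← hsa]
    rw [ContinuousLinearMap.adjoint_inner_right]
  rw [h1, ← inner_conj_symm, Complex.conj_re]

private lemma B_expand (hsa : ContinuousLinearMap.adjoint CH = CH) (x y : H) (t : ℝ) :
    (⟪x + (t:ℂ) • y, CH (x + (t:ℂ) • y)⟫).re
      = (⟪y, CH y⟫).re * t ^ 2 + (2 * (⟪x, CH y⟫).re) * t + (⟪x, CH x⟫).re := by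
  simp only [map_add, map_smul, inner_add_left, inner_add_right, inner_smul_left,
    inner_smul_right, Complex.add_re, Complex.mul_re]
  have hconj : ⟪y, CH x⟫ = starRingEnd ℂ ⟪x, CH y⟫ := by
    conv_rhs => rw [← hsa]
    rw [ContinuousLinearMap.adjoint_inner_right, inner_conj_symm]
  rw [hconj]
  simp only [Complex.conj_re, Complex.conj_im, Complex.ofReal_re, Complex.ofReal_im]
  ring

private noncomputable def pS (CH : H →L[ℂ] H) (v : H) : ℝ := Real.sqrt (⟪v, CH v⟫).re

private lemma pS_nonneg (v : H) : 0 ≤ pS CH v := Real.sqrt_nonneg _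

private lemma pS_sq (hpos : ∀ x : H, 0 ≤ (⟪x, CH x⟫).re) (v : H) :
    pS CH v ^ 2 = (⟪v, CH v⟫).re := Real.sq_sqrt (hpos v)

private lemma B_le_pS (hsa : ContinuousLinearMap.adjoint CH = CH)
    (hpos : ∀ x : H, 0 ≤ (⟪x, CH x⟫).re) (x y : H) :
    (⟪x, CH y⟫).re ≤ pS CH x * pS CH y := by
  have h := discrim_le_zero (a := (⟪y, CH y⟫).re) (b := 2 * (⟪x, CH y⟫).re)
    (c := (⟪x, CH x⟫).re)
    (fun t => by have := B_expand hsa x y t; nlinarith [hpos (x + (t:ℂ) • y)])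
  rw [discrim] at h
  have hsq : (⟪x, CH y⟫).re ^ 2 ≤ (pS CH x * pS CH y) ^ 2 := by
    have e1 := pS_sq hpos x; have e2 := pS_sq hpos y
    nlinarith [pS_nonneg (CH := CH) x, pS_nonneg (CH := CH) y]
  calc (⟪x, CH y⟫).re ≤ |(⟪x, CH y⟫).re| := le_abs_self _
  _ = Real.sqrt ((⟪x, CH y⟫).re ^ 2) := (Real.sqrt_sq_eq_abs _).symm
  _ ≤ Real.sqrt ((pS CH x * pS CH y) ^ 2) := Real.sqrt_le_sqrt hsq
  _ = pS CH x * pS CH y := Real.sqrt_sq (mul_nonneg (pS_nonneg _) (pS_nonneg _))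

private lemma pS_add (hsa : ContinuousLinearMap.adjoint CH = CH)
    (hpos : ∀ x : H, 0 ≤ (⟪x, CH x⟫).re) (x y : H) :
    pS CH (x + y) ≤ pS CH x + pS CH y := by
  have hexp := B_expand hsa x y 1
  simp only [Complex.ofReal_one, one_smul, one_pow, mul_one] at hexp
  have h2 : (⟪x + y, CH (x + y)⟫).re ≤ (pS CH x + pS CH y) ^ 2 := by
    have e1 := pS_sq hpos x; have e2 := pS_sq hpos y
    have := B_le_pS hsa hpos x y
    nlinarith
  calc pS CH (x + y) = Real.sqrt (⟪x + y, CH (x + y)⟫).re := rfl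
  _ ≤ Real.sqrt ((pS CH x + pS CH y) ^ 2) := Real.sqrt_le_sqrt h2
  _ = pS CH x + pS CH y := Real.sqrt_sq (add_nonneg (pS_nonneg _) (pS_nonneg _))

private lemma pS_smul (c : ℂ) (v : H) : pS CH (c • v) = ‖c‖ * pS CH v := by
  unfold pS
  rw [map_smul, inner_smul_left, inner_smul_right, ← mul_assoc, Complex.conj_mul']
  rw [← Complex.ofReal_pow, Complex.re_ofReal_mul, Real.sqrt_mul (by positivity),
    Real.sqrt_sq (norm_nonneg _)]

private lemma pS_sub (hsa : ContinuousLinearMap.adjoint CH = CH)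
    (hpos : ∀ x : H, 0 ≤ (⟪x, CH x⟫).re) (x y : H) :
    pS CH (x - y) ≤ pS CH x + pS CH y := by
  have h := pS_add hsa hpos x (-y)
  have hneg : pS CH (-y) = pS CH y := by
    have := pS_smul (CH := CH) (-1 : ℂ) y
    simpa using this
  rw [hneg] at h
  simpa [sub_eq_add_neg] using h

private lemma pS_le_norm (v : H) : pS CH v ≤ Real.sqrt ‖CH‖ * ‖v‖ := by
  have h1 : (⟪v, CH v⟫).re ≤ ‖CH‖ * ‖v‖ ^ 2 := by
    calc (⟪v, CH v⟫).re ≤ ‖(⟪v, CH v⟫ : ℂ)‖ := Complex.re_le_norm _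
    _ ≤ ‖v‖ * ‖CH v‖ := norm_inner_le_norm _ _
    _ ≤ ‖v‖ * (‖CH‖ * ‖v‖) := by gcongr; exact CH.le_opNorm v
    _ = ‖CH‖ * ‖v‖ ^ 2 := by ring
  calc pS CH v ≤ Real.sqrt (‖CH‖ * ‖v‖ ^ 2) := Real.sqrt_le_sqrt h1
  _ = Real.sqrt ‖CH‖ * ‖v‖ := by
      rw [Real.sqrt_mul (norm_nonneg _), Real.sqrt_sq (norm_nonneg _)]

private lemma norm_CH_le (hsa : ContinuousLinearMap.adjoint CH = CH)
    (hpos : ∀ x : H, 0 ≤ (⟪x, CH x⟫).re) (v : H) :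
    ‖CH v‖ ≤ Real.sqrt ‖CH‖ * pS CH v := by
  rcases eq_or_lt_of_le (norm_nonneg (CH v)) with hz | hz
  · rw [← hz]; exact mul_nonneg (Real.sqrt_nonneg _) (pS_nonneg _)
  have h1 : ‖CH v‖ ^ 2 = (⟪CH v, CH v⟫).re :=
    (inner_self_eq_norm_sq (𝕜 := ℂ) (CH v)).symm
  have h2 : ‖CH v‖ ^ 2 ≤ pS CH v * (Real.sqrt ‖CH‖ * ‖CH v‖) := by
    rw [h1, ← B_symm hsa v (CH v)]
    calc (⟪v, CH (CH v)⟫).re ≤ pS CH v * pS CH (CH v) := B_le_pS hsa hpos v (CH v)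
    _ ≤ pS CH v * (Real.sqrt ‖CH‖ * ‖CH v‖) := by
        gcongr
        · exact pS_nonneg _
        · exact pS_le_norm _
  nlinarith [pS_nonneg (CH := CH) v, Real.sqrt_nonneg ‖CH‖]

end Aux

/-- Let `C` be accretive and hypocoercive with index `m`, `C_η = η CS + CH`. Then for
every `R ≥ 1` there is `μ > 0` such that for all `y` and all `1 ≤ |η| ≤ R`:
`∑_{j=0}^m η^{−2j} ⟨C_η^j y, CH C_η^j y⟩ ≥ μ ‖y‖²`. -/
theorem stmt4
    {H : Type*} [NormedAddCommGroup H] [InnerProductSpace ℂ H] [CompleteSpace H]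
    (C CS CH : H →L[ℂ] H)
    (hCS : CS = (2 : ℂ)⁻¹ • (C - ContinuousLinearMap.adjoint C))
    (hCH : CH = (2 : ℂ)⁻¹ • (C + ContinuousLinearMap.adjoint C))
    (haccr : ∀ x : H, 0 ≤ (⟪x, CH x⟫).re)
    (m : ℕ) (κ : ℝ) (hκ : 0 < κ)
    (hhypo : ∀ x : H, κ * ‖x‖ ^ 2 ≤ ∑ j ∈ Finset.range (m + 1), (⟪(CS ^ j) x, CH ((CS ^ j) x)⟫).re) :
    ∀ R : ℝ, 1 ≤ R → ∃ μ : ℝ, 0 < μ ∧ ∀ (y : H) (η : ℝ), 1 ≤ |η| → |η| ≤ R →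
      μ * ‖y‖ ^ 2 ≤ ∑ j ∈ Finset.range (m + 1),
        (η ^ (2 * j))⁻¹ * (⟪(((η : ℂ) • CS + CH) ^ j) y, CH ((((η : ℂ) • CS + CH) ^ j) y)⟫).re := by
  have hsa : ContinuousLinearMap.adjoint CH = CH := by
    rw [← ContinuousLinearMap.star_eq_adjoint, hCH, ← ContinuousLinearMap.star_eq_adjoint,
      star_smul, star_add, star_star]
    simp [add_comm, Complex.star_def]
  intro R hR
  -- constants
  set N : ℝ := max 1 (‖CS‖ + ‖CH‖) with hN
  have hN1 : 1 ≤ N := le_max_left _ _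
  set M' : ℝ := N ^ m with hM'
  have hM'1 : 1 ≤ M' := one_le_pow₀ hN1
  set c : ℝ := ‖CH‖ * M' with hc
  have hc0 : 0 ≤ c := mul_nonneg (norm_nonneg _) (by linarith)
  set K : ℝ := 1 + (m + 1 : ℝ) * c with hKdef
  have hK1 : 1 ≤ K := by
    have : (0:ℝ) ≤ (m + 1 : ℝ) * c := by positivity
    linarith
  have hK0 : 0 < K := by linarith
  refine ⟨κ / ((m + 1 : ℝ) ^ 2 * K ^ (2 * m)), by positivity, ?_⟩
  intro y η hη1 hηR
  have hη0 : η ≠ 0 := by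
    intro h; rw [h] at hη1; simp at hη1; linarith
  set ε : ℝ := η⁻¹ with hεdef
  have hε1 : |ε| ≤ 1 := by
    rw [hεdef, abs_inv]
    exact inv_le_one_of_one_le₀ hη1
  set D : H →L[ℂ] H := CS + (ε : ℂ) • CH with hD
  -- operator norm bound on powers of D
  have hDnorm : ‖D‖ ≤ N := by
    calc ‖D‖ ≤ ‖CS‖ + ‖(ε:ℂ) • CH‖ := norm_add_le _ _
    _ = ‖CS‖ + |ε| * ‖CH‖ := by rw [norm_smul, Complex.norm_real, Real.norm_eq_abs]
    _ ≤ ‖CS‖ + 1 * ‖CH‖ := by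
        have h := mul_le_mul_of_nonneg_right hε1 (norm_nonneg CH)
        linarith
    _ ≤ N := by rw [one_mul]; exact le_max_right _ _
  have hDpow : ∀ i : ℕ, i ≤ m → ‖(D ^ i : H →L[ℂ] H)‖ ≤ M' := by
    intro i hi
    have h1 : ‖(D ^ i : H →L[ℂ] H)‖ ≤ N ^ i := by
      induction i with
      | zero => rw [pow_zero, pow_zero]; exact ContinuousLinearMap.norm_id_le
      | succ k ihk =>
          calc ‖(D ^ (k+1) : H →L[ℂ] H)‖ = ‖(D ^ k * D : H →L[ℂ] H)‖ := by rw [pow_succ]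
          _ ≤ ‖(D ^ k : H →L[ℂ] H)‖ * ‖D‖ := ContinuousLinearMap.opNorm_comp_le _ _
          _ ≤ N ^ k * N :=
              mul_le_mul (ihk (Nat.le_of_succ_le hi)) hDnorm (norm_nonneg _)
                (pow_nonneg (le_trans zero_le_one hN1) k)
          _ = N ^ (k+1) := by rw [pow_succ]
    calc ‖(D ^ i : H →L[ℂ] H)‖ ≤ N ^ i := h1
    _ ≤ N ^ m := pow_le_pow_right₀ hN1 hi
  -- key one-step estimate
  have hstar : ∀ (x : H) (i : ℕ), i ≤ m →
      pS CH ((D ^ i) (CS x)) ≤ pS CH ((D ^ (i+1)) x) + c * pS CH x := by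
    intro x i hi
    have hx : (D ^ i) (CS x) = (D ^ (i+1)) x - (ε : ℂ) • ((D ^ i) (CH x)) := by
      have : (D ^ (i+1)) x = (D ^ i) (D x) := by
        rw [pow_succ]; rfl
      rw [this, hD]
      simp only [ContinuousLinearMap.add_apply, ContinuousLinearMap.smul_apply, map_add,
        map_smul]
      abel
    rw [hx]
    have h1 : pS CH ((D ^ (i+1)) x - (ε : ℂ) • ((D ^ i) (CH x)))
        ≤ pS CH ((D ^ (i+1)) x) + pS CH ((ε : ℂ) • ((D ^ i) (CH x))) :=
      pS_sub hsa haccr _ _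
    have h2 : pS CH ((ε : ℂ) • ((D ^ i) (CH x))) ≤ c * pS CH x := by
      rw [pS_smul]
      calc ‖(ε:ℂ)‖ * pS CH ((D ^ i) (CH x)) ≤ 1 * pS CH ((D ^ i) (CH x)) := by
            gcongr
            · exact pS_nonneg _
            · rw [Complex.norm_real, Real.norm_eq_abs]; exact hε1
      _ = pS CH ((D ^ i) (CH x)) := one_mul _
      _ ≤ Real.sqrt ‖CH‖ * ‖(D ^ i) (CH x)‖ := pS_le_norm _
      _ ≤ Real.sqrt ‖CH‖ * (M' * ‖CH x‖) := by
            apply mul_le_mul_of_nonneg_left _ (Real.sqrt_nonneg _)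
            calc ‖(D ^ i) (CH x)‖ ≤ ‖(D ^ i : H →L[ℂ] H)‖ * ‖CH x‖ :=
                  ContinuousLinearMap.le_opNorm _ _
            _ ≤ M' * ‖CH x‖ := mul_le_mul_of_nonneg_right (hDpow i hi) (norm_nonneg _)
      _ ≤ Real.sqrt ‖CH‖ * (M' * (Real.sqrt ‖CH‖ * pS CH x)) := by
            apply mul_le_mul_of_nonneg_left _ (Real.sqrt_nonneg _)
            exact mul_le_mul_of_nonneg_left (norm_CH_le hsa haccr x) (by linarith)
      _ = (Real.sqrt ‖CH‖ * Real.sqrt ‖CH‖) * M' * pS CH x := by ring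
      _ = c * pS CH x := by
            rw [Real.mul_self_sqrt (norm_nonneg _)]
    linarith
  -- main inductive claim
  have hclaim : ∀ j : ℕ, j ≤ m → ∀ x : H,
      pS CH ((CS ^ j) x) ≤ K ^ j * ∑ i ∈ Finset.range (j + 1), pS CH ((D ^ i) x) := by
    intro j
    induction j with
    | zero => intro _ x; simp
    | succ j ih =>
      intro hj x
      have hj' : j ≤ m := Nat.le_of_succ_le hj
      have h1 : (CS ^ (j+1)) x = (CS ^ j) (CS x) := by rw [pow_succ]; rfl
      rw [h1]
      have h2 := ih hj' (CS x)
      have h3 : ∑ i ∈ Finset.range (j + 1), pS CH ((D ^ i) (CS x))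
          ≤ ∑ i ∈ Finset.range (j + 1), (pS CH ((D ^ (i+1)) x) + c * pS CH x) := by
        apply Finset.sum_le_sum
        intro i hi
        have : i ≤ m := le_trans (Nat.lt_succ_iff.mp (Finset.mem_range.mp hi)) hj'
        linarith [hstar x i this]
      have h4 : ∑ i ∈ Finset.range (j + 1), (pS CH ((D ^ (i+1)) x) + c * pS CH x)
          = (∑ i ∈ Finset.range (j + 1), pS CH ((D ^ (i+1)) x)) + (j + 1 : ℝ) * (c * pS CH x) := by
        rw [Finset.sum_add_distrib, Finset.sum_const, Finset.card_range, nsmul_eq_mul]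
        push_cast; ring
      set S : ℝ := ∑ i ∈ Finset.range (j + 2), pS CH ((D ^ i) x) with hSdef
      have hS0 : 0 ≤ S := Finset.sum_nonneg fun i _ => pS_nonneg _
      have hsplit : S = (∑ i ∈ Finset.range (j + 1), pS CH ((D ^ (i+1)) x)) + pS CH ((D ^ 0) x) :=
        Finset.sum_range_succ' _ _
      have hp0 : pS CH ((D ^ 0) x) = pS CH x := by simp
      have hpS : pS CH x ≤ S := by
        rw [hsplit, hp0]
        have : (0:ℝ) ≤ ∑ i ∈ Finset.range (j + 1), pS CH ((D ^ (i+1)) x) :=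
          Finset.sum_nonneg fun i _ => pS_nonneg _
        linarith
      have hsumS : (∑ i ∈ Finset.range (j + 1), pS CH ((D ^ (i+1)) x)) ≤ S := by
        rw [hsplit]
        have := pS_nonneg (CH := CH) ((D ^ 0) x)
        linarith
      have hKj : (0:ℝ) ≤ K ^ j := le_of_lt (pow_pos hK0 j)
      have hjm : (j + 1 : ℝ) ≤ (m + 1 : ℝ) := by
        have := hj'
        push_cast
        exact_mod_cast Nat.succ_le_succ hj'
      have hmain : (∑ i ∈ Finset.range (j + 1), pS CH ((D ^ (i+1)) x)) + (j + 1 : ℝ) * (c * pS CH x)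
          ≤ K * S := by
        have hps0 := pS_nonneg (CH := CH) x
        have h5 : (j + 1 : ℝ) * (c * pS CH x) ≤ (m + 1 : ℝ) * (c * pS CH x) := by
          apply mul_le_mul_of_nonneg_right hjm (by positivity)
        have h6 : (m + 1 : ℝ) * (c * pS CH x) ≤ (m + 1 : ℝ) * c * S := by
          have hm0 : (0:ℝ) ≤ (m:ℝ) := Nat.cast_nonneg m
          nlinarith [mul_le_mul_of_nonneg_left hpS hc0]
        rw [hKdef]
        nlinarith
      calc pS CH ((CS ^ j) (CS x)) ≤ K ^ j * ∑ i ∈ Finset.range (j + 1), pS CH ((D ^ i) (CS x)) := h2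
      _ ≤ K ^ j * ((∑ i ∈ Finset.range (j + 1), pS CH ((D ^ (i+1)) x)) + (j + 1 : ℝ) * (c * pS CH x)) := by
          rw [← h4]; exact mul_le_mul_of_nonneg_left h3 hKj
      _ ≤ K ^ j * (K * S) := mul_le_mul_of_nonneg_left hmain hKj
      _ = K ^ (j+1) * S := by ring
  -- rewrite the RHS terms
  have hηε : (η : ℂ) * (ε : ℂ) = 1 := by
    rw [← Complex.ofReal_mul, hεdef, mul_inv_cancel₀ hη0, Complex.ofReal_one]
  have hop : ((η : ℂ) • CS + CH) = (η : ℂ) • D := by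
    rw [hD, smul_add, smul_smul, hηε, one_smul]
  have hterm : ∀ i : ℕ,
      (η ^ (2 * i))⁻¹ * (⟪(((η : ℂ) • CS + CH) ^ i) y, CH ((((η : ℂ) • CS + CH) ^ i) y)⟫).re
        = pS CH ((D ^ i) y) ^ 2 := by
    intro i
    rw [hop, smul_pow]
    have happ : (((η : ℂ) ^ i • (D ^ i)) : H →L[ℂ] H) y = (η : ℂ) ^ i • ((D ^ i) y) := rfl
    rw [happ, ← pS_sq haccr, pS_smul, mul_pow, norm_pow, Complex.norm_real, Real.norm_eq_abs]
    have h1 : (|η| ^ i) ^ 2 = η ^ (2 * i) := by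
      rw [← pow_mul, mul_comm i 2, pow_mul, sq_abs, ← pow_mul]
    rw [h1, ← mul_assoc, inv_mul_cancel₀ (pow_ne_zero _ hη0), one_mul]
  have hRHS : ∑ j ∈ Finset.range (m + 1),
      (η ^ (2 * j))⁻¹ * (⟪(((η : ℂ) • CS + CH) ^ j) y, CH ((((η : ℂ) • CS + CH) ^ j) y)⟫).re
      = ∑ i ∈ Finset.range (m + 1), pS CH ((D ^ i) y) ^ 2 :=
    Finset.sum_congr rfl fun i _ => hterm i
  rw [hRHS]
  set Q : ℝ := ∑ i ∈ Finset.range (m + 1), pS CH ((D ^ i) y) with hQdef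
  have hQ0 : 0 ≤ Q := Finset.sum_nonneg fun i _ => pS_nonneg _
  have hbound : ∀ j : ℕ, j ≤ m → pS CH ((CS ^ j) y) ≤ K ^ m * Q := by
    intro j hj
    calc pS CH ((CS ^ j) y) ≤ K ^ j * ∑ i ∈ Finset.range (j + 1), pS CH ((D ^ i) y) :=
          hclaim j hj y
    _ ≤ K ^ m * Q := by
        apply mul_le_mul
        · exact pow_le_pow_right₀ hK1 hj
        · apply Finset.sum_le_sum_of_subset_of_nonneg
          · exact Finset.range_subset_range.mpr (Nat.succ_le_succ hj)
          · intro i _ _; exact pS_nonneg _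
        · exact Finset.sum_nonneg fun i _ => pS_nonneg _
        · exact le_of_lt (pow_pos hK0 m)
  have hsum1 : κ * ‖y‖ ^ 2 ≤ (m + 1 : ℝ) * (K ^ m * Q) ^ 2 := by
    calc κ * ‖y‖ ^ 2 ≤ ∑ j ∈ Finset.range (m + 1), (⟪(CS ^ j) y, CH ((CS ^ j) y)⟫).re :=
          hhypo y
    _ = ∑ j ∈ Finset.range (m + 1), pS CH ((CS ^ j) y) ^ 2 :=
          Finset.sum_congr rfl fun j _ => (pS_sq haccr _).symm
    _ ≤ ∑ j ∈ Finset.range (m + 1), (K ^ m * Q) ^ 2 := by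
          apply Finset.sum_le_sum
          intro j hj
          have hjm := Nat.lt_succ_iff.mp (Finset.mem_range.mp hj)
          have := hbound j hjm
          have h0 := pS_nonneg (CH := CH) ((CS ^ j) y)
          nlinarith
    _ = (m + 1 : ℝ) * (K ^ m * Q) ^ 2 := by
          rw [Finset.sum_const, Finset.card_range, nsmul_eq_mul]; push_cast; ring
  have hQsq : Q ^ 2 ≤ (m + 1 : ℝ) * ∑ i ∈ Finset.range (m + 1), pS CH ((D ^ i) y) ^ 2 := by
    have h := sq_sum_le_card_mul_sum_sq (s := Finset.range (m+1))
      (f := fun i => pS CH ((D ^ i) y))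
    simpa only [Finset.card_range, Nat.cast_add, Nat.cast_one] using h
  have hfin : κ * ‖y‖ ^ 2 ≤ ((m + 1 : ℝ) ^ 2 * K ^ (2 * m)) *
      ∑ i ∈ Finset.range (m + 1), pS CH ((D ^ i) y) ^ 2 := by
    have hKm : (0:ℝ) ≤ K ^ m := le_of_lt (pow_pos hK0 m)
    have e1 : (K ^ m * Q) ^ 2 = K ^ (2 * m) * Q ^ 2 := by
      rw [mul_pow, ← pow_mul, mul_comm m 2]
    have hm0 : (0:ℝ) ≤ (m : ℝ) + 1 := by positivity
    have hK2m : (0:ℝ) ≤ K ^ (2 * m) := le_of_lt (pow_pos hK0 _)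
    calc κ * ‖y‖ ^ 2 ≤ (m + 1 : ℝ) * (K ^ m * Q) ^ 2 := hsum1
    _ = (m + 1 : ℝ) * K ^ (2 * m) * Q ^ 2 := by rw [e1]; ring
    _ ≤ (m + 1 : ℝ) * K ^ (2 * m) * ((m + 1 : ℝ) * ∑ i ∈ Finset.range (m + 1), pS CH ((D ^ i) y) ^ 2) := by
        apply mul_le_mul_of_nonneg_left hQsq (by positivity)
    _ = ((m + 1 : ℝ) ^ 2 * K ^ (2 * m)) * ∑ i ∈ Finset.range (m + 1), pS CH ((D ^ i) y) ^ 2 := by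
        ring
  rw [div_mul_eq_mul_div, div_le_iff₀ (by positivity)]
  linarith [hfin]
end

section
/- Let (T(t))_{t≥0} be a strongly continuous semigroup on a Banach space, let a be a positive odd integer, and suppose there are constants k₂, t₂ > 0 and a real η with |η| ≥ 1 such that ‖T(t)‖² ≤ 1 − k₂ |η|^{a−1} t^a for all 0 ≤ t ≤ t₂/|η|. Then there exist constants c₂, τ₂ > 0 depending only on k₂, t₂, a such that ‖T(t)‖² ≤ 1 − c₂ t^a for all 0 ≤ t ≤ τ₂. -/
open ContinuousLinearMap

lemma semigroup_pow_bound
    {X : Type*} [NormedAddCommGroup X] [NormedSpace ℂ X]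
    (T : ℝ → (X →L[ℂ] X)) (h0 : T 0 = 1)
    (hmul : ∀ s t : ℝ, 0 ≤ s → 0 ≤ t → T (s + t) = T s ∘L T t)
    (s : ℝ) (hs : 0 ≤ s) : ∀ n : ℕ, ‖T ((n : ℝ) * s)‖ ≤ ‖T s‖ ^ n := by
  intro n
  induction n with
  | zero =>
      simp only [Nat.cast_zero, zero_mul, h0, pow_zero]
      rw [ContinuousLinearMap.one_def]
      exact ContinuousLinearMap.norm_id_le
  | succ n ih =>
      have h1 : ((n + 1 : ℕ) : ℝ) * s = s + (n : ℝ) * s := by push_cast; ring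
      rw [h1, hmul s ((n : ℝ) * s) hs (by positivity)]
      calc ‖T s ∘L T ((n : ℝ) * s)‖ ≤ ‖T s‖ * ‖T ((n : ℝ) * s)‖ :=
            ContinuousLinearMap.opNorm_comp_le _ _
        _ ≤ ‖T s‖ * ‖T s‖ ^ n := by
            exact mul_le_mul_of_nonneg_left ih (norm_nonneg _)
        _ = ‖T s‖ ^ (n + 1) := by ring

/-- Let `(T(t))_{t≥0}` be a strongly continuous semigroup on a Banach space, `a` a
positive odd integer, and suppose there are `k₂, t₂ > 0` and a real `η` with `|η| ≥ 1`
such that `‖T(t)‖² ≤ 1 − k₂ |η|^{a−1} t^a` for `0 ≤ t ≤ t₂/|η|`. Then there are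
`c₂, τ₂ > 0` (independent of `η`) with `‖T(t)‖² ≤ 1 − c₂ t^a` for `0 ≤ t ≤ τ₂`. -/
theorem stmt7
    {X : Type*} [NormedAddCommGroup X] [NormedSpace ℂ X] [CompleteSpace X]
    (a : ℕ) (ha : Odd a) (ha' : 0 < a) (k₂ t₂ : ℝ) (hk₂ : 0 < k₂) (ht₂ : 0 < t₂) :
    ∃ c₂ τ₂ : ℝ, 0 < c₂ ∧ 0 < τ₂ ∧
      ∀ (T : ℝ → (X →L[ℂ] X)),
        T 0 = 1 →
        (∀ s t : ℝ, 0 ≤ s → 0 ≤ t → T (s + t) = T s ∘L T t) →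
        (∀ x : X, ContinuousOn (fun t => T t x) (Set.Ici (0 : ℝ))) →
        ∀ η : ℝ, 1 ≤ |η| →
        (∀ t : ℝ, 0 ≤ t → t ≤ t₂ / |η| → ‖T t‖ ^ 2 ≤ 1 - k₂ * |η| ^ (a - 1) * t ^ a) →
        ∀ t : ℝ, 0 ≤ t → t ≤ τ₂ → ‖T t‖ ^ 2 ≤ 1 - c₂ * t ^ a := by
  refine ⟨k₂ / 2 ^ a, min t₂ (min 1 (1 / k₂)), by positivity, by positivity, ?_⟩
  intro T h0 hmul _hcont η hη hyp t ht htτ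
  have hηpos : (0 : ℝ) < |η| := lt_of_lt_of_le one_pos hη
  set n : ℕ := ⌈|η|⌉₊ with hn_def
  have hn1 : 1 ≤ n := Nat.one_le_ceil_iff.mpr hηpos
  have hnR : (1 : ℝ) ≤ (n : ℝ) := by exact_mod_cast hn1
  have hηn : |η| ≤ (n : ℝ) := Nat.le_ceil _
  have hn2 : (n : ℝ) ≤ 2 * |η| := by
    have := Nat.ceil_lt_add_one (le_of_lt hηpos)
    linarith
  have hnpos : (0 : ℝ) < (n : ℝ) := by linarith
  -- bounds from τ₂
  have ht1 : t ≤ t₂ := le_trans htτ (min_le_left _ _)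
  have ht2 : t ≤ 1 := le_trans htτ (le_trans (min_le_right _ _) (min_le_left _ _))
  have ht3 : t ≤ 1 / k₂ := le_trans htτ (le_trans (min_le_right _ _) (min_le_right _ _))
  have hta1 : t ^ a ≤ t := pow_le_of_le_one ht ht2 ha'.ne'
  set s : ℝ := t / n with hs_def
  have hs : 0 ≤ s := by positivity
  have hsle : s ≤ t₂ / |η| := by
    have h1 : t / (n : ℝ) ≤ t / |η| := div_le_div_of_nonneg_left ht hηpos hηn
    have h2 : t / |η| ≤ t₂ / |η| := by gcongr
    exact le_trans h1 h2
  have hX : ‖T s‖ ^ 2 ≤ 1 - k₂ * |η| ^ (a - 1) * s ^ a := hyp s hs hsle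
  have hb0 : 0 ≤ 1 - k₂ * |η| ^ (a - 1) * s ^ a :=
    le_trans (pow_nonneg (norm_nonneg _) 2) hX
  -- semigroup splitting
  have hns : (n : ℝ) * s = t := by
    rw [hs_def]; field_simp
  have hTt : ‖T t‖ ≤ ‖T s‖ ^ n := by
    have := semigroup_pow_bound T h0 hmul s hs n
    rwa [hns] at this
  have hTt2 : ‖T t‖ ^ 2 ≤ (‖T s‖ ^ 2) ^ n := by
    calc ‖T t‖ ^ 2 ≤ (‖T s‖ ^ n) ^ 2 :=
          pow_le_pow_left₀ (norm_nonneg _) hTt 2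
      _ = (‖T s‖ ^ 2) ^ n := by rw [← pow_mul, ← pow_mul, Nat.mul_comm]
  have step1 : (‖T s‖ ^ 2) ^ n ≤ (1 - k₂ * |η| ^ (a - 1) * s ^ a) ^ n :=
    pow_le_pow_left₀ (pow_nonneg (norm_nonneg _) 2) hX n
  -- σ
  set σ : ℝ := k₂ * t ^ a / 2 ^ (a - 1) with hσ_def
  have h2a1 : (1 : ℝ) ≤ 2 ^ (a - 1) := one_le_pow₀ (by norm_num)
  have hσ0 : 0 ≤ σ := by positivity
  have hσ1 : σ ≤ 1 := by
    have hkt : k₂ * t ≤ 1 := by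
      rw [le_div_iff₀ hk₂] at ht3
      linarith
    have : k₂ * t ^ a ≤ k₂ * t := mul_le_mul_of_nonneg_left hta1 hk₂.le
    rw [hσ_def, div_le_one (by positivity)]
    nlinarith
  -- key: σ / n ≤ k₂ * |η|^(a-1) * s^a
  have hkey : σ / n ≤ k₂ * |η| ^ (a - 1) * s ^ a := by
    have hsa : s ^ a = t ^ a / (n : ℝ) ^ a := by rw [hs_def, div_pow]
    have hna : ((n : ℝ)) ^ a = (n : ℝ) ^ (a - 1) * n := by
      rw [← pow_succ]
      congr 1
      omega
    have hcmp : ((n : ℝ)) ^ (a - 1) ≤ 2 ^ (a - 1) * |η| ^ (a - 1) := by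
      rw [← mul_pow]
      exact pow_le_pow_left₀ (Nat.cast_nonneg n) hn2 _
    have hta0 : 0 ≤ t ^ a := pow_nonneg ht a
    have hη0 : 0 ≤ |η| ^ (a - 1) := pow_nonneg (abs_nonneg η) _
    have goal2 : k₂ * t ^ a / (2 ^ (a - 1) * (n : ℝ)) ≤ k₂ * |η| ^ (a - 1) * t ^ a / (n : ℝ) ^ a := by
      rw [div_le_div_iff₀ (by positivity) (by positivity)]
      calc k₂ * t ^ a * (n : ℝ) ^ a = k₂ * t ^ a * ((n : ℝ) ^ (a - 1) * n) := by rw [hna]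
        _ ≤ k₂ * t ^ a * (2 ^ (a - 1) * |η| ^ (a - 1) * n) := by
            apply mul_le_mul_of_nonneg_left _ (by positivity)
            exact mul_le_mul_of_nonneg_right hcmp hnpos.le
        _ = k₂ * |η| ^ (a - 1) * t ^ a * (2 ^ (a - 1) * n) := by ring
    calc σ / (n : ℝ) = k₂ * t ^ a / (2 ^ (a - 1) * (n : ℝ)) := by rw [hσ_def, div_div]
      _ ≤ k₂ * |η| ^ (a - 1) * t ^ a / (n : ℝ) ^ a := goal2
      _ = k₂ * |η| ^ (a - 1) * s ^ a := by rw [hsa]; ring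
  have step2 : (1 - k₂ * |η| ^ (a - 1) * s ^ a) ^ n ≤ (1 - σ / n) ^ n :=
    pow_le_pow_left₀ hb0 (by linarith) n
  -- (1 - σ/n)^n ≤ exp (-σ)
  have hσn1 : σ / n ≤ 1 := by
    rw [div_le_one hnpos]; linarith
  have hbase : 0 ≤ 1 - σ / n := by linarith
  have step3 : (1 - σ / n) ^ n ≤ Real.exp (-σ) := by
    have h1 : 1 - σ / n ≤ Real.exp (-(σ / n)) := by
      have := Real.add_one_le_exp (-(σ / n))
      linarith
    calc (1 - σ / n) ^ n ≤ (Real.exp (-(σ / n))) ^ n :=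
          pow_le_pow_left₀ hbase h1 n
      _ = Real.exp ((n : ℝ) * (-(σ / n))) := (Real.exp_nat_mul _ n).symm
      _ = Real.exp (-σ) := by
          congr 1
          field_simp
  -- exp (-σ) ≤ 1 - σ/2
  have step4 : Real.exp (-σ) ≤ 1 - σ / 2 := by
    have h1 : σ + 1 ≤ Real.exp σ := Real.add_one_le_exp σ
    have hpos : (0 : ℝ) < 1 + σ := by linarith
    have h2 : Real.exp (-σ) = (Real.exp σ)⁻¹ := Real.exp_neg σ
    have h3 : (Real.exp σ)⁻¹ ≤ (1 + σ)⁻¹ := by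
      apply inv_anti₀ hpos
      linarith
    have h4 : (1 + σ)⁻¹ ≤ 1 - σ / 2 := by
      rw [inv_eq_one_div, div_le_iff₀ hpos]
      nlinarith
    linarith [h2 ▸ le_trans h3 h4]
  -- σ/2 = (k₂ / 2^a) * t^a
  have hfin : σ / 2 = k₂ / 2 ^ a * t ^ a := by
    have h2a : (2 : ℝ) ^ a = 2 ^ (a - 1) * 2 := by
      rw [← pow_succ]
      congr 1
      omega
    rw [hσ_def, h2a]
    field_simp
  calc ‖T t‖ ^ 2 ≤ (‖T s‖ ^ 2) ^ n := hTt2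
    _ ≤ (1 - k₂ * |η| ^ (a - 1) * s ^ a) ^ n := step1
    _ ≤ (1 - σ / n) ^ n := step2
    _ ≤ Real.exp (-σ) := step3
    _ ≤ 1 - σ / 2 := step4
    _ = 1 - k₂ / 2 ^ a * t ^ a := by rw [hfin]
end

section
/- Let C ∈ B(H) be accretive and hypocoercive with index m, E ⊆ ℝ \ (−1,1) countable, C_η = η C_S + C_H, and on X = ⊕_{η∈E} H define C_E (x_η)_η = (C_η x_η)_η on its maximal domain, and P by (P x)_η = Σ_{j=0}^m η^{−2j} (C_η*)^j C_η^j x_η. Then there exists σ > 0 such that for all x in the domain of C_E: ⟨−C_E x, P x⟩ + ⟨P x, −C_E x⟩ ≤ −σ ‖x‖². -/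
set_option maxHeartbeats 1000000
set_option synthInstance.maxHeartbeats 1000000

open scoped ComplexInnerProductSpace ENNReal

/-- The mode operator `C_η = η CS + CH`. -/
def modeOp {H : Type*} [NormedAddCommGroup H] [InnerProductSpace ℂ H]
    (CS CH : H →L[ℂ] H) (η : ℝ) : H →L[ℂ] H :=
  (η : ℂ) • CS + CH

/-- The `η`-component of the Lyapunov operator `P`,
`(P x)_η = ∑_{j=0}^m η^{−2j} (C_η*)^j C_η^j x_η`. -/
noncomputable def lyapComp {H : Type*} [NormedAddCommGroup H] [InnerProductSpace ℂ H]
    [CompleteSpace H] (CS CH : H →L[ℂ] H) (m : ℕ) (η : ℝ) (v : H) : H :=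
  ∑ j ∈ Finset.range (m + 1),
    (((η ^ (2 * j))⁻¹ : ℝ) : ℂ)
      • (((ContinuousLinearMap.adjoint (modeOp CS CH η)) ^ j) (((modeOp CS CH η) ^ j) v))

/-- Discrete Grönwall-type estimate. -/
lemma aux_gronwall {a b : ℕ → ℝ} {c T : ℝ} {m : ℕ} (hc : 0 ≤ c)
    (hb : ∀ j ≤ m, b j ≤ T)
    (h : ∀ j ≤ m, a j ≤ b j + c * ∑ i ∈ Finset.range j, a i) :
    ∀ j ≤ m, a j ≤ (1 + c) ^ j * T := by
  intro j
  induction j using Nat.strong_induction_on with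
  | _ j ih =>
    intro hjm
    have hsum : ∑ i ∈ Finset.range j, a i ≤ ∑ i ∈ Finset.range j, (1 + c) ^ i * T := by
      refine Finset.sum_le_sum fun i hi => ?_
      exact ih i (Finset.mem_range.mp hi) (le_trans (le_of_lt (Finset.mem_range.mp hi)) hjm)
    have hgeo : ∑ i ∈ Finset.range j, c * ((1 + c) ^ i) = (1 + c) ^ j - 1 := by
      have h0 := geom_sum_mul (1 + c) j
      calc ∑ i ∈ Finset.range j, c * ((1 + c) ^ i)
          = (∑ i ∈ Finset.range j, (1 + c) ^ i) * ((1 + c) - 1) := by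
            rw [Finset.sum_mul]
            exact Finset.sum_congr rfl fun i _ => by ring
        _ = (1 + c) ^ j - 1 := h0
    calc a j ≤ b j + c * ∑ i ∈ Finset.range j, a i := h j hjm
      _ ≤ T + c * ∑ i ∈ Finset.range j, (1 + c) ^ i * T := by
          have := hb j hjm
          have h2 : c * ∑ i ∈ Finset.range j, a i ≤ c * ∑ i ∈ Finset.range j, (1 + c) ^ i * T :=
            mul_le_mul_of_nonneg_left hsum hc
          linarith
      _ = T + (∑ i ∈ Finset.range j, c * ((1 + c) ^ i)) * T := by
          rw [Finset.sum_mul, Finset.mul_sum]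
          exact congrArg _ (Finset.sum_congr rfl fun i _ => by ring)
      _ = (1 + c) ^ j * T := by rw [hgeo]; ring

section Aux

variable {H : Type*} [NormedAddCommGroup H] [InnerProductSpace ℂ H] [CompleteSpace H]

/-- Telescoping bound for powers. -/
lemma aux_pow_sub (A B : H →L[ℂ] H) {N : ℝ} (hB : ‖B‖ ≤ N) (hN : 1 ≤ N) (j : ℕ) (v : H) :
    ‖(B ^ j) v - (A ^ j) v‖ ≤ N ^ j * ∑ i ∈ Finset.range j, ‖(B - A) ((A ^ i) v)‖ := by
  induction j with
  | zero => simp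
  | succ j ih =>
    have h1 : (B ^ (j + 1)) v - (A ^ (j + 1)) v
        = B ((B ^ j) v - (A ^ j) v) + (B - A) ((A ^ j) v) := by
      rw [pow_succ' B, pow_succ' A, ContinuousLinearMap.mul_apply,
        ContinuousLinearMap.mul_apply, ContinuousLinearMap.sub_apply, map_sub]
      abel
    have h2 : ‖B ((B ^ j) v - (A ^ j) v)‖ ≤ N * ‖(B ^ j) v - (A ^ j) v‖ :=
      le_trans (B.le_opNorm _) (mul_le_mul_of_nonneg_right hB (norm_nonneg _))
    have hS : (0 : ℝ) ≤ ∑ i ∈ Finset.range j, ‖(B - A) ((A ^ i) v)‖ :=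
      Finset.sum_nonneg fun i _ => norm_nonneg _
    have hNj : (1 : ℝ) ≤ N ^ (j + 1) := one_le_pow₀ hN
    have hN0 : (0 : ℝ) ≤ N := by linarith
    calc ‖(B ^ (j + 1)) v - (A ^ (j + 1)) v‖
        ≤ ‖B ((B ^ j) v - (A ^ j) v)‖ + ‖(B - A) ((A ^ j) v)‖ := by rw [h1]; exact norm_add_le _ _
      _ ≤ N * (N ^ j * ∑ i ∈ Finset.range j, ‖(B - A) ((A ^ i) v)‖)
            + ‖(B - A) ((A ^ j) v)‖ := by
          have := mul_le_mul_of_nonneg_left ih hN0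
          linarith [h2]
      _ ≤ N ^ (j + 1) * ∑ i ∈ Finset.range (j + 1), ‖(B - A) ((A ^ i) v)‖ := by
          rw [Finset.sum_range_succ]
          have hterm : ‖(B - A) ((A ^ j) v)‖ ≤ N ^ (j + 1) * ‖(B - A) ((A ^ j) v)‖ :=
            le_mul_of_one_le_left (norm_nonneg _) hNj
          have : N * (N ^ j * ∑ i ∈ Finset.range j, ‖(B - A) ((A ^ i) v)‖)
              = N ^ (j + 1) * ∑ i ∈ Finset.range j, ‖(B - A) ((A ^ i) v)‖ := by ring
          rw [mul_add]
          linarith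

/-- Simple norm bound for iterated application. -/
lemma aux_pow_apply (B : H →L[ℂ] H) {N : ℝ} (hB : ‖B‖ ≤ N) (hN : 1 ≤ N) (j : ℕ) (u : H) :
    ‖(B ^ j) u‖ ≤ N ^ j * ‖u‖ := by
  induction j with
  | zero => simpa using le_refl ‖u‖
  | succ j ih =>
    rw [pow_succ']
    calc ‖(B * B ^ j) u‖ = ‖B ((B ^ j) u)‖ := rfl
      _ ≤ ‖B‖ * ‖(B ^ j) u‖ := B.le_opNorm _
      _ ≤ N * (N ^ j * ‖u‖) := by
          have h0 : (0:ℝ) ≤ N := by linarith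
          have := mul_le_mul hB ih (norm_nonneg _) h0
          linarith
      _ = N ^ (j + 1) * ‖u‖ := by ring

/-- Uniform hypocoercivity bound for the perturbed operators `CS + ε CH`, `|ε| ≤ 1`. -/
lemma aux_key (CS CH D : H →L[ℂ] H) (m : ℕ) (κ : ℝ)
    (hq : ∀ w : H, (⟪w, CH w⟫).re = ‖D w‖ ^ 2)
    (hDD : ∀ w : H, D (D w) = CH w)
    (hhypo : ∀ x : H, κ * ‖x‖ ^ 2 ≤
      ∑ j ∈ Finset.range (m + 1), (⟪(CS ^ j) x, CH ((CS ^ j) x)⟫).re) :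
    ∃ K : ℝ, 0 < K ∧ ∀ (ε : ℝ), |ε| ≤ 1 → ∀ v : H,
      κ * ‖v‖ ^ 2 ≤ K * ∑ j ∈ Finset.range (m + 1), ‖D (((CS + (ε : ℂ) • CH) ^ j) v)‖ ^ 2 := by
  set N : ℝ := max 1 (‖CS‖ + ‖CH‖) with hNdef
  have hN1 : (1 : ℝ) ≤ N := le_max_left _ _
  have hN0 : (0 : ℝ) ≤ N := by linarith
  set c : ℝ := ‖D‖ ^ 2 * N ^ m with hcdef
  have hc0 : 0 ≤ c := by positivity
  have h1c : (1 : ℝ) ≤ 1 + c := by linarith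
  set K : ℝ := ((m : ℝ) + 1) ^ 2 * ((1 + c) ^ m) ^ 2 with hKdef
  have hK0 : 0 < K := by positivity
  refine ⟨K, hK0, fun ε hε v => ?_⟩
  set B : H →L[ℂ] H := CS + (ε : ℂ) • CH with hBdef
  have hεc : ‖((ε : ℝ) : ℂ)‖ ≤ 1 := by
    rw [Complex.norm_real, Real.norm_eq_abs]; exact hε
  have hBnorm : ‖B‖ ≤ N := by
    calc ‖B‖ ≤ ‖CS‖ + ‖(ε : ℂ) • CH‖ := norm_add_le _ _
      _ ≤ ‖CS‖ + ‖CH‖ := by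
          rw [norm_smul]
          nlinarith [norm_nonneg CH]
      _ ≤ N := le_max_right _ _
  set a : ℕ → ℝ := fun j => ‖D ((CS ^ j) v)‖ with hadef
  set b : ℕ → ℝ := fun j => ‖D ((B ^ j) v)‖ with hbdef
  set T : ℝ := ∑ k ∈ Finset.range (m + 1), b k with hTdef
  have hbnn : ∀ k, 0 ≤ b k := fun k => norm_nonneg _
  have hann : ∀ k, 0 ≤ a k := fun k => norm_nonneg _
  have hT0 : 0 ≤ T := Finset.sum_nonneg fun k _ => hbnn k
  have hbT : ∀ j ≤ m, b j ≤ T := by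
    intro j hj
    exact Finset.single_le_sum (fun k _ => hbnn k) (Finset.mem_range.mpr (by omega))
  have hrec : ∀ j ≤ m, a j ≤ b j + c * ∑ i ∈ Finset.range j, a i := by
    intro j hj
    have htri : a j - b j ≤ ‖D ((CS ^ j) v) - D ((B ^ j) v)‖ := norm_sub_norm_le _ _
    have h2 : ‖D ((CS ^ j) v) - D ((B ^ j) v)‖ ≤ ‖D‖ * ‖(B ^ j) v - (CS ^ j) v‖ := by
      rw [← map_sub, ← norm_neg, ← map_neg, neg_sub]
      exact D.le_opNorm _
    have h3 := aux_pow_sub CS B hBnorm hN1 j v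
    have h4 : ∑ i ∈ Finset.range j, ‖(B - CS) ((CS ^ i) v)‖
        ≤ ∑ i ∈ Finset.range j, ‖D‖ * a i := by
      refine Finset.sum_le_sum fun i _ => ?_
      have hBC : B - CS = (ε : ℂ) • CH := by rw [hBdef]; abel
      rw [hBC]
      calc ‖((ε : ℂ) • CH) ((CS ^ i) v)‖ = ‖((ε : ℝ) : ℂ)‖ * ‖CH ((CS ^ i) v)‖ := by
            rw [ContinuousLinearMap.smul_apply, norm_smul]
        _ ≤ ‖CH ((CS ^ i) v)‖ := by
            nlinarith [norm_nonneg (CH ((CS ^ i) v))]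
        _ = ‖D (D ((CS ^ i) v))‖ := by rw [hDD]
        _ ≤ ‖D‖ * a i := D.le_opNorm _
    have hNjm : N ^ j ≤ N ^ m := pow_le_pow_right₀ hN1 hj
    have hsan : 0 ≤ ∑ i ∈ Finset.range j, a i := Finset.sum_nonneg fun i _ => hann i
    have h5 : ‖D‖ * (N ^ j * ∑ i ∈ Finset.range j, ‖(B - CS) ((CS ^ i) v)‖)
        ≤ c * ∑ i ∈ Finset.range j, a i := by
      rw [hcdef]
      have hsum' : ∑ i ∈ Finset.range j, ‖(B - CS) ((CS ^ i) v)‖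
          ≤ ‖D‖ * ∑ i ∈ Finset.range j, a i := by
        rw [Finset.mul_sum]; exact h4
      calc ‖D‖ * (N ^ j * ∑ i ∈ Finset.range j, ‖(B - CS) ((CS ^ i) v)‖)
          = (‖D‖ * N ^ j) * ∑ i ∈ Finset.range j, ‖(B - CS) ((CS ^ i) v)‖ := by ring
        _ ≤ (‖D‖ * N ^ j) * (‖D‖ * ∑ i ∈ Finset.range j, a i) := by
            refine mul_le_mul_of_nonneg_left hsum' ?_
            positivity
        _ = (‖D‖ ^ 2 * ∑ i ∈ Finset.range j, a i) * N ^ j := by ring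
        _ ≤ (‖D‖ ^ 2 * ∑ i ∈ Finset.range j, a i) * N ^ m := by
            refine mul_le_mul_of_nonneg_left hNjm ?_
            positivity
        _ = ‖D‖ ^ 2 * N ^ m * ∑ i ∈ Finset.range j, a i := by ring
    have h6 := mul_le_mul_of_nonneg_left h3 (norm_nonneg D)
    linarith
  have hstep := aux_gronwall hc0 hbT hrec
  have hA : ∀ j ≤ m, a j ≤ (1 + c) ^ m * T := by
    intro j hj
    calc a j ≤ (1 + c) ^ j * T := hstep j hj
      _ ≤ (1 + c) ^ m * T := by
          have := pow_le_pow_right₀ h1c hj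
          nlinarith
  have hsq : ∑ j ∈ Finset.range (m + 1), a j ^ 2
      ≤ ((m : ℝ) + 1) * ((1 + c) ^ m * T) ^ 2 := by
    have hsq1 : ∀ j ∈ Finset.range (m + 1), a j ^ 2 ≤ ((1 + c) ^ m * T) ^ 2 := by
      intro j hj
      have hjm : j ≤ m := by
        have := Finset.mem_range.mp hj; omega
      have := hA j hjm
      nlinarith [hann j]
    calc ∑ j ∈ Finset.range (m + 1), a j ^ 2
        ≤ ∑ j ∈ Finset.range (m + 1), ((1 + c) ^ m * T) ^ 2 := Finset.sum_le_sum hsq1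
      _ = ((m : ℝ) + 1) * ((1 + c) ^ m * T) ^ 2 := by
          rw [Finset.sum_const, Finset.card_range]; push_cast; ring
  have hcs : T ^ 2 ≤ ((m : ℝ) + 1) * ∑ k ∈ Finset.range (m + 1), b k ^ 2 := by
    have := sq_sum_le_card_mul_sum_sq (s := Finset.range (m + 1)) (f := b)
    simpa [Finset.card_range] using this
  have hhyp' : κ * ‖v‖ ^ 2 ≤ ∑ j ∈ Finset.range (m + 1), a j ^ 2 := by
    calc κ * ‖v‖ ^ 2 ≤ ∑ j ∈ Finset.range (m + 1), (⟪(CS ^ j) v, CH ((CS ^ j) v)⟫).re := hhypo v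
      _ = ∑ j ∈ Finset.range (m + 1), a j ^ 2 :=
          Finset.sum_congr rfl fun j _ => hq _
  have hbsq : 0 ≤ ∑ k ∈ Finset.range (m + 1), b k ^ 2 :=
    Finset.sum_nonneg fun k _ => sq_nonneg _
  calc κ * ‖v‖ ^ 2 ≤ ∑ j ∈ Finset.range (m + 1), a j ^ 2 := hhyp'
    _ ≤ ((m : ℝ) + 1) * ((1 + c) ^ m * T) ^ 2 := hsq
    _ = ((m : ℝ) + 1) * ((1 + c) ^ m) ^ 2 * T ^ 2 := by ring
    _ ≤ ((m : ℝ) + 1) * ((1 + c) ^ m) ^ 2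
          * (((m : ℝ) + 1) * ∑ k ∈ Finset.range (m + 1), b k ^ 2) := by
        have hpos : (0:ℝ) ≤ ((m : ℝ) + 1) * ((1 + c) ^ m) ^ 2 := by positivity
        exact mul_le_mul_of_nonneg_left hcs hpos
    _ = K * ∑ j ∈ Finset.range (m + 1), ‖D (((CS + (ε : ℂ) • CH) ^ j) v)‖ ^ 2 := by
        rw [hKdef, ← hBdef]; ring

/-- The mode-wise dissipation identity. -/
lemma aux_mode (CS CH D : H →L[ℂ] H) (m : ℕ)
    (hS : ContinuousLinearMap.adjoint CS = -CS)
    (hq : ∀ w : H, (⟪w, CH w⟫).re = ‖D w‖ ^ 2)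
    (η : ℝ) (hη : 1 ≤ |η|) (v : H) :
    (⟪-(modeOp CS CH η v), lyapComp CS CH m η v⟫
       + ⟪lyapComp CS CH m η v, -(modeOp CS CH η v)⟫).re
      = -2 * ∑ j ∈ Finset.range (m + 1),
          ‖D (((CS + ((η⁻¹ : ℝ) : ℂ) • CH) ^ j) v)‖ ^ 2 := by
  have hη0 : η ≠ 0 := by intro h; rw [h] at hη; simp at hη; linarith
  have hηc0 : (η : ℂ) ≠ 0 := by exact_mod_cast hη0
  set Cη : H →L[ℂ] H := modeOp CS CH η with hCη
  set B : H →L[ℂ] H := CS + ((η⁻¹ : ℝ) : ℂ) • CH with hBdef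
  have hCB : Cη = (η : ℂ) • B := by
    rw [hCη, hBdef, modeOp, smul_add, smul_smul]
    congr 1
    rw [Complex.ofReal_inv, mul_inv_cancel₀ hηc0, one_smul]
  have hpow : ∀ j : ℕ, (ContinuousLinearMap.adjoint Cη) ^ j
      = ContinuousLinearMap.adjoint (Cη ^ j) := by
    intro j
    rw [← ContinuousLinearMap.star_eq_adjoint, ← ContinuousLinearMap.star_eq_adjoint, star_pow]
  have hskew : ∀ w : H, (⟪w, CS w⟫).re = 0 := by
    intro w
    have h1 : ⟪(ContinuousLinearMap.adjoint CS) w, w⟫ = ⟪w, CS w⟫ :=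
      ContinuousLinearMap.adjoint_inner_left CS w w
    rw [hS] at h1
    have h2 : (-(⟪CS w, w⟫) : ℂ) = ⟪w, CS w⟫ := by
      simpa using h1
    have h3 : ⟪CS w, w⟫ = (starRingEnd ℂ) ⟪w, CS w⟫ := (inner_conj_symm _ _).symm
    have h5 : (⟪CS w, w⟫ : ℂ).re = (⟪w, CS w⟫ : ℂ).re := by
      rw [h3]; exact Complex.conj_re _
    have h6 := congrArg Complex.re h2
    simp only [Complex.neg_re] at h6
    linarith
  have hre : ∀ w : H, (⟪w, Cη w⟫).re = ‖D w‖ ^ 2 := by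
    intro w
    have happl : Cη w = (η : ℂ) • CS w + CH w := by
      rw [hCη, modeOp]; rfl
    rw [happl, inner_add_right, inner_smul_right]
    have hmulre : ((η : ℂ) * ⟪w, CS w⟫).re = η * (⟪w, CS w⟫).re := by
      simp [Complex.mul_re]
    rw [Complex.add_re, hmulre, hskew w, hq w]
    ring
  have hterm : ∀ j ∈ Finset.range (m + 1),
      (⟪-(Cη v), (((η ^ (2 * j))⁻¹ : ℝ) : ℂ)
          • (((ContinuousLinearMap.adjoint Cη) ^ j) ((Cη ^ j) v))⟫
        + ⟪(((η ^ (2 * j))⁻¹ : ℝ) : ℂ)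
          • (((ContinuousLinearMap.adjoint Cη) ^ j) ((Cη ^ j) v)), -(Cη v)⟫).re
      = -2 * ‖D ((B ^ j) v)‖ ^ 2 := by
    intro j _
    set w : H := (Cη ^ j) v with hw
    have happ : (Cη ^ j) (Cη v) = Cη w := by
      rw [hw, ← ContinuousLinearMap.mul_apply, ← ContinuousLinearMap.mul_apply,
        ← pow_succ, ← pow_succ']
    have e1 : ⟪Cη v, ((ContinuousLinearMap.adjoint Cη) ^ j) w⟫ = ⟪Cη w, w⟫ := by
      rw [hpow, ContinuousLinearMap.adjoint_inner_right, happ]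
    have e2 : ⟪((ContinuousLinearMap.adjoint Cη) ^ j) w, Cη v⟫ = ⟪w, Cη w⟫ := by
      rw [hpow, ContinuousLinearMap.adjoint_inner_left, happ]
    rw [inner_neg_left, inner_neg_right, inner_smul_right, inner_smul_left, e1, e2]
    rw [Complex.conj_ofReal]
    have hconj : ⟪Cη w, w⟫ = (starRingEnd ℂ) ⟪w, Cη w⟫ := (inner_conj_symm _ _).symm
    set z : ℂ := ⟪w, Cη w⟫ with hz
    have hz2 : (-((((η ^ (2 * j))⁻¹ : ℝ) : ℂ) * (starRingEnd ℂ) z)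
        + -((((η ^ (2 * j))⁻¹ : ℝ) : ℂ) * z)).re
        = -(η ^ (2 * j))⁻¹ * (2 * z.re) := by
      have hcc : (starRingEnd ℂ) z + z = ((2 * z.re : ℝ) : ℂ) := by
        rw [add_comm, Complex.add_conj]
        try norm_cast
      calc (-((((η ^ (2 * j))⁻¹ : ℝ) : ℂ) * (starRingEnd ℂ) z)
            + -((((η ^ (2 * j))⁻¹ : ℝ) : ℂ) * z)).re
          = ((-(((η ^ (2 * j))⁻¹ : ℝ) : ℂ)) * ((starRingEnd ℂ) z + z)).re := by ring_nf
        _ = ((-(((η ^ (2 * j))⁻¹ : ℝ) : ℂ)) * ((2 * z.re : ℝ) : ℂ)).re := by rw [hcc]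
        _ = -(η ^ (2 * j))⁻¹ * (2 * z.re) := by
            rw [← Complex.ofReal_neg, ← Complex.ofReal_mul]
            exact Complex.ofReal_re _
    have hzre : z.re = η ^ (2 * j) * ‖D ((B ^ j) v)‖ ^ 2 := by
      have hwB : w = ((η : ℂ) ^ j) • ((B ^ j) v) := by
        rw [hw, hCB, smul_pow, ContinuousLinearMap.smul_apply]
      have hzre1 : z.re = ‖D w‖ ^ 2 := hre w
      rw [hzre1, hwB, map_smul, norm_smul]
      have hnc : ‖(η : ℂ) ^ j‖ = |η| ^ j := by
        rw [norm_pow, Complex.norm_real, Real.norm_eq_abs]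
      rw [hnc, mul_pow, ← pow_mul, mul_comm j 2, Even.pow_abs ⟨j, by ring⟩]
    rw [hconj, hz2, hzre]
    have hne : η ^ (2 * j) ≠ 0 := pow_ne_zero _ hη0
    field_simp
  rw [lyapComp]
  rw [inner_sum, sum_inner, ← Finset.sum_add_distrib, Complex.re_sum]
  rw [Finset.sum_congr rfl hterm, ← Finset.mul_sum]

end Aux

/-- Let `C` be accretive and hypocoercive with index `m` (parts `CS`, `CH`), `E ⊆ ℝ \ (−1,1)`
countable, `C_η = η CS + CH`, `C_E` the diagonal operator on `X = ⊕_{η∈E} H` with maximal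
domain, and `(P x)_η = ∑_{j=0}^m η^{−2j} (C_η*)^j C_η^j x_η`. Then there is `σ > 0` with
`⟨−C_E x, P x⟩ + ⟨P x, −C_E x⟩ ≤ −σ ‖x‖²` for all `x` in the domain of `C_E`. -/
theorem stmt10
    {H : Type*} [NormedAddCommGroup H] [InnerProductSpace ℂ H] [CompleteSpace H]
    (C CS CH : H →L[ℂ] H)
    (hCS : CS = (2 : ℂ)⁻¹ • (C - ContinuousLinearMap.adjoint C))
    (hCH : CH = (2 : ℂ)⁻¹ • (C + ContinuousLinearMap.adjoint C))
    (haccr : ∀ x : H, 0 ≤ (⟪x, CH x⟫).re)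
    (m : ℕ) (κ : ℝ) (hκ : 0 < κ)
    (hhypo : ∀ x : H, κ * ‖x‖ ^ 2 ≤ ∑ j ∈ Finset.range (m + 1), (⟪(CS ^ j) x, CH ((CS ^ j) x)⟫).re)
    (E : Set ℝ) (hE : E.Countable) (hE1 : ∀ η ∈ E, 1 ≤ |η|) :
    ∃ σ : ℝ, 0 < σ ∧
      ∀ x : lp (fun _ : E => H) 2,
        Summable (fun η : E => ‖modeOp CS CH (η : ℝ) ((x : ∀ _ : E, H) η)‖ ^ 2) →
        (∑' η : E,
            (⟪-(modeOp CS CH (η : ℝ) ((x : ∀ _ : E, H) η)),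
                lyapComp CS CH m (η : ℝ) ((x : ∀ _ : E, H) η)⟫
              + ⟪lyapComp CS CH m (η : ℝ) ((x : ∀ _ : E, H) η),
                -(modeOp CS CH (η : ℝ) ((x : ∀ _ : E, H) η))⟫).re)
          ≤ -σ * ‖x‖ ^ 2 := by
  classical
  -- skew and self-adjoint parts
  have hSadj : ContinuousLinearMap.adjoint CS = -CS := by
    rw [← ContinuousLinearMap.star_eq_adjoint, hCS, ← ContinuousLinearMap.star_eq_adjoint]
    simp only [star_smul, star_sub, star_star, star_inv₀, smul_sub]
    rw [show star (2:ℂ) = 2 by norm_num]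
    module
  have hHsa : IsSelfAdjoint CH := by
    rw [IsSelfAdjoint, hCH, ← ContinuousLinearMap.star_eq_adjoint]
    simp only [star_smul, star_add, star_star, star_inv₀]
    rw [show star (2:ℂ) = 2 by norm_num]
    module
  have hpos : (0 : H →L[ℂ] H) ≤ CH := by
    rw [ContinuousLinearMap.nonneg_iff_isPositive]
    refine ⟨hHsa.isSymmetric, fun x => ?_⟩
    rw [ContinuousLinearMap.reApplyInnerSelf_apply]
    have h := haccr x
    have hresym : (⟪CH x, x⟫ : ℂ).re = (⟪x, CH x⟫ : ℂ).re := by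
      rw [← inner_conj_symm]; exact Complex.conj_re _
    rw [show (RCLike.re : ℂ →+ ℝ) = Complex.reAddGroupHom from rfl]
    simpa [Complex.reAddGroupHom] using hresym ▸ h
  -- the square root of CH
  set D : H →L[ℂ] H := CFC.sqrt CH with hDdef
  have hDmul : D * D = CH := CFC.sqrt_mul_sqrt_self CH hpos
  have hDsa : ContinuousLinearMap.adjoint D = D := by
    rw [← ContinuousLinearMap.star_eq_adjoint]
    exact IsSelfAdjoint.of_nonneg (CFC.sqrt_nonneg _)
  have hDD : ∀ w : H, D (D w) = CH w := by
    intro w; rw [← hDmul]; rfl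
  have hq : ∀ w : H, (⟪w, CH w⟫).re = ‖D w‖ ^ 2 := by
    intro w
    rw [← hDD w]
    have h2 := ContinuousLinearMap.adjoint_inner_right D w (D w)
    rw [hDsa] at h2
    rw [h2, inner_self_eq_norm_sq_to_K]
    norm_cast
  obtain ⟨K, hK0, hKb⟩ := aux_key CS CH D m κ hq hDD hhypo
  refine ⟨2 * (κ / K), by positivity, fun x _ => ?_⟩
  -- constants for summability
  set N : ℝ := max 1 (‖CS‖ + ‖CH‖) with hNdef
  have hN1 : (1 : ℝ) ≤ N := le_max_left _ _
  -- per-mode quantities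
  set xf : E → H := fun η => (x : ∀ _ : E, H) η with hxf
  set Sb : E → ℝ := fun η => ∑ j ∈ Finset.range (m + 1),
    ‖D (((CS + (((η : ℝ)⁻¹ : ℝ) : ℂ) • CH) ^ j) (xf η))‖ ^ 2 with hSbdef
  have hSb_nonneg : ∀ η, 0 ≤ Sb η := fun η => Finset.sum_nonneg fun j _ => sq_nonneg _
  have hSb_le : ∀ η : E, Sb η ≤ ((m : ℝ) + 1) * (‖D‖ * N ^ m) ^ 2 * ‖xf η‖ ^ 2 := by
    intro η
    have hBn : ‖CS + (((η : ℝ)⁻¹ : ℝ) : ℂ) • CH‖ ≤ N := by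
      have hεc : ‖((((η : ℝ)⁻¹ : ℝ)) : ℂ)‖ ≤ 1 := by
        rw [Complex.norm_real, Real.norm_eq_abs, abs_inv]
        have h1 := hE1 η η.2
        rw [inv_le_one_iff₀]; right; exact h1
      calc ‖CS + (((η : ℝ)⁻¹ : ℝ) : ℂ) • CH‖ ≤ ‖CS‖ + ‖(((η : ℝ)⁻¹ : ℝ) : ℂ) • CH‖ :=
            norm_add_le _ _
        _ ≤ ‖CS‖ + ‖CH‖ := by
            rw [norm_smul]
            nlinarith [norm_nonneg CH]
        _ ≤ N := le_max_right _ _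
    have hterm : ∀ j ∈ Finset.range (m + 1),
        ‖D (((CS + (((η : ℝ)⁻¹ : ℝ) : ℂ) • CH) ^ j) (xf η))‖ ^ 2
          ≤ (‖D‖ * N ^ m) ^ 2 * ‖xf η‖ ^ 2 := by
      intro j hj
      have hjm : j ≤ m := by have := Finset.mem_range.mp hj; omega
      have h1 : ‖D (((CS + (((η : ℝ)⁻¹ : ℝ) : ℂ) • CH) ^ j) (xf η))‖
          ≤ ‖D‖ * (N ^ j * ‖xf η‖) :=
        le_trans (D.le_opNorm _)
          (mul_le_mul_of_nonneg_left (aux_pow_apply _ hBn hN1 j _) (norm_nonneg D))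
      have hNj : N ^ j ≤ N ^ m := pow_le_pow_right₀ hN1 hjm
      have h2 : ‖D‖ * (N ^ j * ‖xf η‖) ≤ ‖D‖ * N ^ m * ‖xf η‖ := by
        have := mul_le_mul_of_nonneg_right hNj (norm_nonneg (xf η))
        nlinarith [norm_nonneg D]
      nlinarith [norm_nonneg (D (((CS + (((η : ℝ)⁻¹ : ℝ) : ℂ) • CH) ^ j) (xf η))),
        norm_nonneg D, pow_nonneg (le_trans zero_le_one hN1) m, norm_nonneg (xf η)]
    calc Sb η ≤ ∑ j ∈ Finset.range (m + 1), (‖D‖ * N ^ m) ^ 2 * ‖xf η‖ ^ 2 :=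
          Finset.sum_le_sum hterm
      _ = ((m : ℝ) + 1) * (‖D‖ * N ^ m) ^ 2 * ‖xf η‖ ^ 2 := by
          rw [Finset.sum_const, Finset.card_range]; push_cast; ring
  -- the pointwise identity
  have hmode : ∀ η : E,
      (⟪-(modeOp CS CH (η : ℝ) ((x : ∀ _ : E, H) η)),
          lyapComp CS CH m (η : ℝ) ((x : ∀ _ : E, H) η)⟫
        + ⟪lyapComp CS CH m (η : ℝ) ((x : ∀ _ : E, H) η),
          -(modeOp CS CH (η : ℝ) ((x : ∀ _ : E, H) η))⟫).re = -2 * Sb η := by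
    intro η
    exact aux_mode CS CH D m hSadj hq (η : ℝ) (hE1 η η.2) (xf η)
  -- pointwise bound
  have hptwise : ∀ η : E,
      (⟪-(modeOp CS CH (η : ℝ) ((x : ∀ _ : E, H) η)),
          lyapComp CS CH m (η : ℝ) ((x : ∀ _ : E, H) η)⟫
        + ⟪lyapComp CS CH m (η : ℝ) ((x : ∀ _ : E, H) η),
          -(modeOp CS CH (η : ℝ) ((x : ∀ _ : E, H) η))⟫).re
        ≤ -(2 * (κ / K)) * ‖xf η‖ ^ 2 := by
    intro η
    rw [hmode η]
    have hεabs : |(η : ℝ)⁻¹| ≤ 1 := by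
      rw [abs_inv]
      rw [inv_le_one_iff₀]; right; exact hE1 η η.2
    have hk := hKb ((η : ℝ)⁻¹) hεabs (xf η)
    have hk2 : κ / K * ‖xf η‖ ^ 2 ≤ Sb η := by
      rw [div_mul_eq_mul_div, div_le_iff₀ hK0]
      calc κ * ‖xf η‖ ^ 2 ≤ K * Sb η := hk
        _ = Sb η * K := by ring
    linarith
  -- summability
  have hsum2 : Summable (fun η : E => ‖xf η‖ ^ 2) := by
    have h := (lp.memℓp x).summable (p := 2) (by norm_num)
    convert h using 2 with η
    rw [show ((2:ℝ≥0∞).toReal) = ((2:ℕ):ℝ) by norm_num, Real.rpow_natCast]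
  have hnormx : ∑' η : E, ‖xf η‖ ^ 2 = ‖x‖ ^ 2 := by
    have h := lp.norm_rpow_eq_tsum (p := 2) (by norm_num) x
    rw [show ((2:ℝ≥0∞).toReal) = ((2:ℕ):ℝ) by norm_num] at h
    simp only [Real.rpow_natCast] at h
    rw [← h]
  have hsumf : Summable (fun η : E =>
      (⟪-(modeOp CS CH (η : ℝ) ((x : ∀ _ : E, H) η)),
          lyapComp CS CH m (η : ℝ) ((x : ∀ _ : E, H) η)⟫
        + ⟪lyapComp CS CH m (η : ℝ) ((x : ∀ _ : E, H) η),
          -(modeOp CS CH (η : ℝ) ((x : ∀ _ : E, H) η))⟫).re) := by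
    have hneg : Summable (fun η : E => 2 * Sb η) := by
      refine Summable.of_nonneg_of_le (fun η => by positivity) (fun η => ?_)
        ((hsum2.mul_left (2 * (((m : ℝ) + 1) * (‖D‖ * N ^ m) ^ 2))))
      have := hSb_le η
      nlinarith [hSb_nonneg η]
    have h2 : Summable (fun η : E => -(2 * Sb η)) := hneg.neg
    refine h2.congr fun η => ?_
    rw [hmode η]; ring
  have hsumg : Summable (fun η : E => -(2 * (κ / K)) * ‖xf η‖ ^ 2) :=
    hsum2.mul_left _
  calc (∑' η : E,
        (⟪-(modeOp CS CH (η : ℝ) ((x : ∀ _ : E, H) η)),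
            lyapComp CS CH m (η : ℝ) ((x : ∀ _ : E, H) η)⟫
          + ⟪lyapComp CS CH m (η : ℝ) ((x : ∀ _ : E, H) η),
            -(modeOp CS CH (η : ℝ) ((x : ∀ _ : E, H) η))⟫).re)
      ≤ ∑' η : E, -(2 * (κ / K)) * ‖xf η‖ ^ 2 := Summable.tsum_le_tsum hptwise hsumf hsumg
    _ = -(2 * (κ / K)) * ∑' η : E, ‖xf η‖ ^ 2 := tsum_mul_left
    _ = -(2 * (κ / K)) * ‖x‖ ^ 2 := by rw [hnormx]
    _ = -(2 * (κ / K)) * ‖x‖ ^ 2 := rfl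
end

section
/- Let A = −C with C ∈ B(H) accretive on a Hilbert space H. If there exist a bounded self-adjoint operator P with P ≥ Id and σ > 0 such that ⟨A x, P x⟩ + ⟨P x, A x⟩ ≤ −σ‖x‖² for all x ∈ H, then the semigroup (e^{At})_{t≥0} is exponentially stable: there are M ≥ 1, ω > 0 with ‖e^{At}‖ ≤ M e^{−ωt} for all t ≥ 0. -/
open scoped ComplexInnerProductSpace

set_option maxHeartbeats 1000000 in
set_option synthInstance.maxHeartbeats 1000000 in
/-- If `A = −C` with `C` bounded accretive, and there are a bounded self-adjoint `P ≥ Id`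
and `σ > 0` with `⟨Ax, Px⟩ + ⟨Px, Ax⟩ ≤ −σ‖x‖²` for all `x`, then `(e^{At})_{t≥0}` is
exponentially stable: `‖e^{At}‖ ≤ M e^{−ωt}` for some `M ≥ 1`, `ω > 0`. -/
theorem stmt11
    {H : Type*} [NormedAddCommGroup H] [InnerProductSpace ℂ H] [CompleteSpace H]
    (C : H →L[ℂ] H)
    (haccr : ∀ x : H, 0 ≤ (⟪x, C x⟫).re)
    (P : H →L[ℂ] H) (hP : IsSelfAdjoint P)
    (hPge : ∀ x : H, ‖x‖ ^ 2 ≤ (⟪x, P x⟫).re)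
    (σ : ℝ) (hσ : 0 < σ)
    (hLyap : ∀ x : H, (⟪(-C) x, P x⟫ + ⟪P x, (-C) x⟫).re ≤ -σ * ‖x‖ ^ 2) :
    ∃ M ω : ℝ, 1 ≤ M ∧ 0 < ω ∧
      ∀ t : ℝ, 0 ≤ t → ‖NormedSpace.exp (t • (-C))‖ ≤ M * Real.exp (-ω * t) := by
  set A : H →L[ℂ] H := -C with hAdef
  set N : ℝ := max 1 ‖P‖ with hNdef
  have hN1 : (1 : ℝ) ≤ N := le_max_left _ _
  have hN0 : (0 : ℝ) < N := lt_of_lt_of_le one_pos hN1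
  set c : ℝ := σ / N with hcdef
  have hc0 : 0 < c := div_pos hσ hN0
  set ω : ℝ := c / 2 with hωdef
  refine ⟨Real.sqrt N, ω, ?_, by positivity, ?_⟩
  · rw [show (1:ℝ) = Real.sqrt 1 by simp]
    exact Real.sqrt_le_sqrt hN1
  intro t ht
  -- bound pointwise
  have key : ∀ x : H, ‖NormedSpace.exp (t • A) x‖ ≤
      Real.sqrt N * Real.exp (-ω * t) * ‖x‖ := by
    intro x
    set u : ℝ → H := fun s => NormedSpace.exp (s • A) x with hudef
    have hu : ∀ s : ℝ, HasDerivAt u (A (u s)) s := by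
      intro s
      have h := hasDerivAt_exp_smul_const' (𝕂 := ℝ) (𝔸 := H →L[ℂ] H) A s
      have h2 := (((ContinuousLinearMap.apply ℂ H x).restrictScalars ℝ).hasFDerivAt.comp_hasDerivAt s h)
      simp only [hudef]
      simpa [Function.comp_def] using h2
    set f : ℝ → ℝ := fun s => (⟪u s, P (u s)⟫).re with hfdef
    have hf : ∀ s : ℝ, HasDerivAt f
        ((⟪u s, P (A (u s))⟫ + ⟪A (u s), P (u s)⟫).re) s := by
      intro s
      have hv : HasDerivAt (fun s => P (u s)) (P (A (u s))) s :=
        (((P.restrictScalars ℝ)).hasFDerivAt.comp_hasDerivAt s (hu s))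
      have hin := HasDerivAt.inner ℂ (hu s) hv
      have := (Complex.reCLM.hasFDerivAt.comp_hasDerivAt s hin)
      simpa [Function.comp_def] using this
    set g : ℝ → ℝ := fun s => f s * Real.exp (c * s) with hgdef
    have hg : ∀ s : ℝ, HasDerivAt g
        ((⟪u s, P (A (u s))⟫ + ⟪A (u s), P (u s)⟫).re * Real.exp (c * s)
          + f s * (Real.exp (c * s) * c)) s := by
      intro s
      have := (hf s).mul (((hasDerivAt_id s).const_mul c).exp)
      simp only [id_eq, mul_one] at this
      exact this
    have hg' : ∀ s : ℝ, deriv g s ≤ 0 := by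
      intro s
      rw [(hg s).deriv]
      have hPnorm : f s ≤ N * ‖u s‖ ^ 2 := by
        have h1 : (⟪u s, P (u s)⟫).re ≤ ‖⟪u s, P (u s)⟫‖ := Complex.re_le_norm _
        have h2 : ‖⟪u s, P (u s)⟫‖ ≤ ‖u s‖ * ‖P (u s)‖ := norm_inner_le_norm _ _
        have h3 : ‖P (u s)‖ ≤ ‖P‖ * ‖u s‖ := P.le_opNorm _
        have h4 : ‖P‖ ≤ N := le_max_right _ _
        nlinarith [norm_nonneg (u s), norm_nonneg (P (u s))]
      have hself : (⟪u s, P (A (u s))⟫ + ⟪A (u s), P (u s)⟫).re ≤ -σ * ‖u s‖ ^ 2 := by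
        have : ⟪u s, P (A (u s))⟫ = ⟪P (u s), A (u s)⟫ := by
          rw [← ContinuousLinearMap.adjoint_inner_left, hP.adjoint_eq]
        rw [this, add_comm]
        exact hLyap (u s)
      have hexp : 0 < Real.exp (c * s) := Real.exp_pos _
      have hcf : c * f s ≤ σ * ‖u s‖ ^ 2 := by
        have : c * f s ≤ c * (N * ‖u s‖ ^ 2) := by
          apply mul_le_mul_of_nonneg_left hPnorm hc0.le
        calc c * f s ≤ c * (N * ‖u s‖ ^ 2) := this
          _ = (c * N) * ‖u s‖ ^ 2 := by ring
          _ = σ * ‖u s‖ ^ 2 := by rw [hcdef]; field_simp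
      nlinarith [mul_le_mul_of_nonneg_right hself hexp.le,
        mul_le_mul_of_nonneg_right hcf hexp.le]
    have hanti : Antitone g :=
      antitone_of_deriv_nonpos (fun s => (hg s).differentiableAt) hg'
    have hgt : g t ≤ g 0 := hanti ht
    have hu0 : u 0 = x := by
      simp [hudef, NormedSpace.exp_zero]
    have hf0 : f 0 ≤ N * ‖x‖ ^ 2 := by
      simp only [hfdef, hu0]
      have h1 : (⟪x, P x⟫).re ≤ ‖⟪x, P x⟫‖ := Complex.re_le_norm _
      have h2 : ‖⟪x, P x⟫‖ ≤ ‖x‖ * ‖P x‖ := norm_inner_le_norm _ _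
      have h3 : ‖P x‖ ≤ ‖P‖ * ‖x‖ := P.le_opNorm _
      have h4 : ‖P‖ ≤ N := le_max_right _ _
      nlinarith [norm_nonneg x, norm_nonneg (P x)]
    have hft : ‖u t‖ ^ 2 ≤ f t := hPge (u t)
    have hg0 : g 0 = f 0 := by simp [hgdef]
    have hbound : ‖u t‖ ^ 2 ≤ N * ‖x‖ ^ 2 * Real.exp (-c * t) := by
      have hexp : 0 < Real.exp (c * t) := Real.exp_pos _
      have : f t * Real.exp (c * t) ≤ N * ‖x‖ ^ 2 := by
        calc f t * Real.exp (c * t) = g t := rfl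
          _ ≤ g 0 := hgt
          _ = f 0 := hg0
          _ ≤ N * ‖x‖ ^ 2 := hf0
      have h5 : f t ≤ N * ‖x‖ ^ 2 * Real.exp (-c * t) := by
        have he : Real.exp (-c * t) * Real.exp (c * t) = 1 := by
          rw [← Real.exp_add]; ring_nf; exact Real.exp_zero
        nlinarith [mul_le_mul_of_nonneg_right this (Real.exp_pos (-c * t)).le, he]
      linarith [hft]
    have hrhs : (Real.sqrt N * Real.exp (-ω * t) * ‖x‖) ^ 2
        = N * ‖x‖ ^ 2 * Real.exp (-c * t) := by
      have hsq : Real.sqrt N ^ 2 = N := Real.sq_sqrt hN0.le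
      have hexpsq : Real.exp (-ω * t) ^ 2 = Real.exp (-c * t) := by
        rw [pow_two, ← Real.exp_add]
        congr 1
        rw [hωdef]; ring
      rw [mul_pow, mul_pow, hsq, hexpsq]; ring
    have := hbound.trans_eq hrhs.symm
    calc ‖u t‖ = Real.sqrt (‖u t‖ ^ 2) := (Real.sqrt_sq (norm_nonneg _)).symm
      _ ≤ Real.sqrt ((Real.sqrt N * Real.exp (-ω * t) * ‖x‖) ^ 2) := Real.sqrt_le_sqrt this
      _ = Real.sqrt N * Real.exp (-ω * t) * ‖x‖ := Real.sqrt_sq (by positivity)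
  exact ContinuousLinearMap.opNorm_le_bound _ (by positivity) key
end

section
/- If C ∈ B(H) is hypocoercive with index m (Σ_{j=0}^m (C*)^j C_H C^j ≥ κ Id, κ > 0), then the operator P = Σ_{j=0}^{m} (C*)^j C^j is bounded, self-adjoint, satisfies P ≥ Id, and solves the Lyapunov inequality: there exists σ > 0 with ⟨−C x, P x⟩ + ⟨P x, −C x⟩ ≤ −σ‖x‖² for all x ∈ H. -/
open scoped ComplexInnerProductSpace
open ContinuousLinearMap

/-- If `C ∈ B(H)` is hypocoercive with index `m` (`∑_{j=0}^m (C*)^j C_H C^j ≥ κ Id`,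
`κ > 0`, where `C_H = (C+C*)/2 ≥ 0`), then `P = ∑_{j=0}^m (C*)^j C^j` is bounded,
self-adjoint, `P ≥ Id`, and solves the Lyapunov inequality
`⟨−Cx, Px⟩ + ⟨Px, −Cx⟩ ≤ −σ‖x‖²` for some `σ > 0`. -/
theorem stmt12
    {H : Type*} [NormedAddCommGroup H] [InnerProductSpace ℂ H] [CompleteSpace H]
    (C CH : H →L[ℂ] H)
    (hCH : CH = (2 : ℂ)⁻¹ • (C + ContinuousLinearMap.adjoint C))
    (haccr : ∀ x : H, 0 ≤ (⟪x, CH x⟫).re)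
    (m : ℕ) (κ : ℝ) (hκ : 0 < κ)
    (hhypo : ∀ x : H, κ * ‖x‖ ^ 2 ≤ ∑ j ∈ Finset.range (m + 1), (⟪(C ^ j) x, CH ((C ^ j) x)⟫).re) :
    IsSelfAdjoint (∑ j ∈ Finset.range (m + 1),
        ((ContinuousLinearMap.adjoint C) ^ j) ∘L (C ^ j))
    ∧ (∀ x : H, ‖x‖ ^ 2
        ≤ (⟪x, (∑ j ∈ Finset.range (m + 1),
            ((ContinuousLinearMap.adjoint C) ^ j) ∘L (C ^ j)) x⟫).re)
    ∧ ∃ σ : ℝ, 0 < σ ∧ ∀ x : H,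
        (⟪(-C) x, (∑ j ∈ Finset.range (m + 1),
              ((ContinuousLinearMap.adjoint C) ^ j) ∘L (C ^ j)) x⟫
          + ⟪(∑ j ∈ Finset.range (m + 1),
              ((ContinuousLinearMap.adjoint C) ^ j) ∘L (C ^ j)) x, (-C) x⟫).re
          ≤ -σ * ‖x‖ ^ 2 := by
  have hadj : ∀ j : ℕ,
      (ContinuousLinearMap.adjoint C) ^ j = ContinuousLinearMap.adjoint (C ^ j) := by
    intro j
    rw [← ContinuousLinearMap.star_eq_adjoint, ← ContinuousLinearMap.star_eq_adjoint,
      ← star_pow]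
  set P := ∑ j ∈ Finset.range (m + 1),
      ((ContinuousLinearMap.adjoint C) ^ j) ∘L (C ^ j) with hP
  -- value of each term
  have hterm : ∀ (j : ℕ) (x y : H),
      ⟪y, (((ContinuousLinearMap.adjoint C) ^ j) ∘L (C ^ j)) x⟫ = ⟪(C ^ j) y, (C ^ j) x⟫ := by
    intro j x y
    rw [hadj j]
    simp [ContinuousLinearMap.adjoint_inner_right]
  have hPx : ∀ x y : H, ⟪y, P x⟫ = ∑ j ∈ Finset.range (m + 1), ⟪(C ^ j) y, (C ^ j) x⟫ := by
    intro x y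
    rw [hP, ContinuousLinearMap.sum_apply, inner_sum]
    exact Finset.sum_congr rfl fun j _ => hterm j x y
  have hselfadj : IsSelfAdjoint P := by
    rw [hP]
    refine Finset.sum_induction _ IsSelfAdjoint (fun a b ha hb => ha.add hb)
      (IsSelfAdjoint.zero _) (fun j _ => ?_)
    rw [IsSelfAdjoint, hadj j]
    calc star (ContinuousLinearMap.adjoint (C ^ j) * (C ^ j))
        = star (C ^ j) * star (star (C ^ j)) := by
          rw [star_mul, ContinuousLinearMap.star_eq_adjoint]
      _ = ContinuousLinearMap.adjoint (C ^ j) ∘L (C ^ j) := by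
          rw [star_star, ContinuousLinearMap.star_eq_adjoint]; rfl
  have hre : ∀ y : H, (⟪C y, y⟫).re = (⟪y, CH y⟫).re := by
    intro y
    have h1 : ⟪y, CH y⟫ = (2 : ℂ)⁻¹ * (⟪y, C y⟫ + ⟪C y, y⟫) := by
      rw [hCH]
      simp [inner_smul_right, inner_add_right, ContinuousLinearMap.adjoint_inner_right]
      ring
    have h2 : ⟪y, C y⟫ = starRingEnd ℂ ⟪C y, y⟫ := (inner_conj_symm _ _).symm
    rw [h1, h2, add_comm, Complex.add_conj, Complex.ofReal_mul]
    have : (2 : ℂ)⁻¹ * (((2 : ℝ) : ℂ) * ((⟪C y, y⟫ : ℂ).re : ℂ)) = ((⟪C y, y⟫ : ℂ).re : ℂ) := by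
      push_cast; ring
    rw [this, Complex.ofReal_re]
  refine ⟨hselfadj, ?_, ?_⟩
  · intro x
    have := hPx x x
    have hre2 : (⟪x, P x⟫).re = ∑ j ∈ Finset.range (m + 1), ‖(C ^ j) x‖ ^ 2 := by
      rw [this, Complex.re_sum]
      exact Finset.sum_congr rfl fun j _ => by
        rw [← inner_self_eq_norm_sq (𝕜 := ℂ)]; rfl
    rw [hre2]
    calc ‖x‖ ^ 2 = ‖(C ^ 0) x‖ ^ 2 := by simp
    _ ≤ ∑ j ∈ Finset.range (m + 1), ‖(C ^ j) x‖ ^ 2 :=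
      Finset.single_le_sum (f := fun j => ‖(C ^ j) x‖ ^ 2) (fun j _ => sq_nonneg _)
        (Finset.mem_range.2 (Nat.succ_pos m))
  · refine ⟨2 * κ, by positivity, fun x => ?_⟩
    have h2 : (⟪C x, P x⟫).re = ∑ j ∈ Finset.range (m + 1), (⟪(C ^ j) x, CH ((C ^ j) x)⟫).re := by
      rw [hPx x (C x), Complex.re_sum]
      refine Finset.sum_congr rfl fun j _ => ?_
      have hcomm : (C ^ j) (C x) = C ((C ^ j) x) := by
        rw [← ContinuousLinearMap.mul_apply, ← ContinuousLinearMap.mul_apply,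
          ← pow_succ, ← pow_succ']
      rw [hcomm]
      exact hre ((C ^ j) x)
    have hge : κ * ‖x‖ ^ 2 ≤ (⟪C x, P x⟫).re := h2 ▸ hhypo x
    have h1 : ⟪P x, (-C) x⟫ = starRingEnd ℂ ⟪(-C) x, P x⟫ := (inner_conj_symm _ _).symm
    rw [h1, Complex.add_conj, Complex.ofReal_re]
    have hneg : (⟪(-C) x, P x⟫).re = -(⟪C x, P x⟫).re := by
      simp [inner_neg_left]
    rw [hneg]
    nlinarith [hge]
end
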